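/- arXiv:2505.22603 — 4 statements merged into one kernel-verified Lean document; each statement's English description precedes it below -/
import Mathlib

section
/- Let L be a finite subset of X, and let A be a family of 2|L|+1 pairwise disjoint nonempty good subsets of X. Then there exists b ∈ A such that no endpoint of b lies in L, i.e., Im(seq_b) ∩ L = ∅. -/
open Set

/-- `X = [0,1) ∩ ℚ`, represented as a set of rationals. -/
def Xset : Set ℚ := {x | 0 ≤ x ∧ x < 1}

/-- `X ∪ {1}`, the possible endpoints. -/
def Eset : Set ℚ := Xset ∪ {1}

/-- `f` (restricted to `{0,…,2n-1}`) is an increasing sequence of endpoints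
representing `a` as a union of half-open intervals `[f(2i), f(2i+1))`. -/
def IsGoodSeq (n : ℕ) (f : ℕ → ℚ) (a : Set ℚ) : Prop :=
  (∀ i < 2 * n, f i ∈ Eset) ∧
  (∀ i j : ℕ, i < j → j < 2 * n → f i < f j) ∧
  (∀ x ∈ Xset, (x ∈ a ↔ ∃ i < n, f (2 * i) ≤ x ∧ x < f (2 * i + 1)))

/-- A subset of `X` is good if it is a finite union of half-open intervals. -/
def IsGood (a : Set ℚ) : Prop := a ⊆ Xset ∧ ∃ n f, IsGoodSeq n f a

/-- The set of endpoints of a good set (the image of its endpoint sequence). -/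
def endpoints (a : Set ℚ) : Set ℚ :=
  {u | ∃ n f, IsGoodSeq n f a ∧ ∃ i < 2 * n, f i = u}

/-- A function `e` is finite-to-one on `X ∪ {1}`. -/
def FinToOne (e : ℚ → ℕ) : Prop := ∀ m : ℕ, {x ∈ Eset | e x = m}.Finite

/-- `int(a) = {e(u) : u ∈ Im(seq_a)}`, the interesting numbers of `a`. -/
def intS (e : ℚ → ℕ) (a : Set ℚ) : Set ℕ := e '' endpoints a

/-- `a` and `b` oscillate at `i`: for some side `k`, `i` belongs to `int` of that
side only, and the largest `j < i` lying in the symmetric difference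
`int(a) ∆ int(b)` (if any) belongs to the other side only. -/
def OscAt (e : ℚ → ℕ) (a b : Set ℚ) (i : ℕ) : Prop :=
  ∃ k : Bool,
    (i ∈ intS e (bif k then b else a) ∧ i ∉ intS e (bif k then a else b)) ∧
    ∀ j, j < i → j ∈ symmDiff (intS e a) (intS e b) →
      (∀ j', j < j' → j' < i → j' ∉ symmDiff (intS e a) (intS e b)) →
      (j ∈ intS e (bif k then a else b) ∧ j ∉ intS e (bif k then b else a))

/-- The oscillation of `a` and `b`: the number of `i` at which they oscillate. -/
noncomputable def osc (e : ℚ → ℕ) (a b : Set ℚ) : ℕ := {i | OscAt e a b i}.ncard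

/-- `C` is a Boolean subalgebra of the interval algebra of good subsets of `X`. -/
def IsSubalg (C : Set (Set ℚ)) : Prop :=
  (∀ a ∈ C, IsGood a) ∧ ∅ ∈ C ∧ Xset ∈ C ∧
  (∀ a ∈ C, ∀ b ∈ C, a ∪ b ∈ C) ∧
  (∀ a ∈ C, ∀ b ∈ C, a ∩ b ∈ C) ∧
  (∀ a ∈ C, Xset \ a ∈ C)

/-- `C` is atomless: every nonempty member properly contains a nonempty member. -/
def IsAtomlessAlg (C : Set (Set ℚ)) : Prop :=
  ∀ a ∈ C, a ≠ ∅ → ∃ b ∈ C, b ≠ ∅ ∧ b ⊂ a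

lemma mem_Eset_bounds {u : ℚ} (h : u ∈ Eset) : 0 ≤ u ∧ u ≤ 1 := by
  rcases h with h | h
  · exact ⟨h.1, h.2.le⟩
  · rw [Set.mem_singleton_iff] at h; rw [h]; norm_num

lemma near_of_endpoint {a : Set ℚ} {x : ℚ} (hx : x ∈ endpoints a) :
    (∃ y, x < y ∧ Set.Ioo x y ⊆ a) ∨ (∃ y, y < x ∧ Set.Ioo y x ⊆ a) := by
  obtain ⟨n, f, ⟨hE, hmono, hmem⟩, i, hi, hfi⟩ := hx
  have hsub : ∀ k, 2 * k + 1 < 2 * n → Set.Ioo (f (2*k)) (f (2*k+1)) ⊆ a := by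
    intro k hk z hz
    have hk' : k < n := by omega
    have hb0 := mem_Eset_bounds (hE _ (by omega : 2*k < 2*n))
    have hb1 := mem_Eset_bounds (hE _ hk)
    have hzX : z ∈ Xset := ⟨le_trans hb0.1 hz.1.le, lt_of_lt_of_le hz.2 hb1.2⟩
    exact (hmem z hzX).2 ⟨k, hk', hz.1.le, hz.2⟩
  rcases Nat.even_or_odd i with ⟨k, hk⟩ | ⟨k, hk⟩
  · left
    have h2 : 2 * k + 1 < 2 * n := by omega
    refine ⟨f (2*k+1), ?_, ?_⟩
    · rw [← hfi, show i = 2*k by omega]; exact hmono _ _ (by omega) h2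
    · rw [← hfi, show i = 2*k by omega]; exact fun z hz => hsub k h2 hz
  · right
    have h2 : 2 * k + 1 < 2 * n := by omega
    refine ⟨f (2*k), ?_, ?_⟩
    · rw [← hfi, show i = 2*k+1 by omega]; exact hmono _ _ (by omega) h2
    · rw [← hfi, show i = 2*k+1 by omega]; exact fun z hz => hsub k h2 hz

/-- among `2|L|+1` pairwise disjoint nonempty good sets, some
member has no endpoint in the finite set `L ⊆ X`. -/
theorem exists_unblocked (L : Finset ℚ) (hL : ↑L ⊆ Xset)
    (A : Finset (Set ℚ)) (hcard : A.card = 2 * L.card + 1)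
    (hgood : ∀ a ∈ A, IsGood a ∧ a.Nonempty)
    (hdisj : ∀ a ∈ A, ∀ b ∈ A, a ≠ b → a ∩ b = ∅) :
    ∃ b ∈ A, endpoints b ∩ ↑L = ∅ := by
  classical
  by_contra hcon
  push_neg at hcon
  have key : ∀ a : Set ℚ, a ∈ A → ∃ p : ℚ × Bool, p ∈ L ×ˢ (Finset.univ : Finset Bool) ∧
      (if p.2 then ∃ y, p.1 < y ∧ Set.Ioo p.1 y ⊆ a
        else ∃ y, y < p.1 ∧ Set.Ioo y p.1 ⊆ a) := by
    intro a ha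
    have hne : (endpoints a ∩ ↑L).Nonempty := hcon a ha
    obtain ⟨x, hxe, hxL⟩ := hne
    rcases near_of_endpoint hxe with ⟨y, hy, hsub⟩ | ⟨y, hy, hsub⟩
    · exact ⟨(x, true), by simpa using hxL, by simpa using ⟨y, hy, hsub⟩⟩
    · exact ⟨(x, false), by simpa using hxL, by simpa using ⟨y, hy, hsub⟩⟩
  choose F hF1 hF2 using key
  have hmaps : ∀ a ∈ A.attach, F a.1 a.2 ∈ L ×ˢ (Finset.univ : Finset Bool) :=
    fun a _ => hF1 a.1 a.2
  have hcard' : (L ×ˢ (Finset.univ : Finset Bool)).card < A.attach.card := by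
    simp [Finset.card_product, hcard]; omega
  obtain ⟨a, ha, b, hb, hne, heq⟩ :=
    Finset.exists_ne_map_eq_of_card_lt_of_maps_to hcard' hmaps
  have hab : a.1 ≠ b.1 := fun h => hne (Subtype.ext h)
  have hdab := hdisj a.1 a.2 b.1 b.2 hab
  have h2a := hF2 a.1 a.2
  have h2b := hF2 b.1 b.2
  rw [heq] at h2a
  by_cases hbl : (F b.1 b.2).2
  · rw [if_pos hbl] at h2a h2b
    obtain ⟨y, hy, hsa⟩ := h2a
    obtain ⟨y', hy', hsb⟩ := h2b
    obtain ⟨z, hz1, hz2⟩ := exists_between (lt_min hy hy')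
    have hz : z ∈ a.1 ∩ b.1 := ⟨hsa ⟨hz1, lt_of_lt_of_le hz2 (min_le_left _ _)⟩,
      hsb ⟨hz1, lt_of_lt_of_le hz2 (min_le_right _ _)⟩⟩
    rw [hdab] at hz; exact hz
  · rw [if_neg hbl] at h2a h2b
    obtain ⟨y, hy, hsa⟩ := h2a
    obtain ⟨y', hy', hsb⟩ := h2b
    obtain ⟨z, hz1, hz2⟩ := exists_between (max_lt hy hy')
    have hz : z ∈ a.1 ∩ b.1 := ⟨hsa ⟨lt_of_le_of_lt (le_max_left _ _) hz1, hz2⟩,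
      hsb ⟨lt_of_le_of_lt (le_max_right _ _) hz1, hz2⟩⟩
    rw [hdab] at hz; exact hz
end

section
/- Each point x ∈ X ∪ {1} is an endpoint of at most two members of any pairwise disjoint family of nonempty good subsets of X; that is, for any pairwise disjoint family A of good sets, |{a ∈ A : x ∈ Im(seq_a)}| ≤ 2. -/
open Set

/-- The set fills an interval just to the left of `x`. -/
def LeftOf (a : Set ℚ) (x : ℚ) : Prop := ∃ δ < x, ∀ y, δ < y → y < x → y ∈ a

lemma eset_bounds {z : ℚ} (hz : z ∈ Eset) : 0 ≤ z ∧ z ≤ 1 := by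
  rcases hz with ⟨h0, h1⟩ | h
  · exact ⟨h0, le_of_lt h1⟩
  · simp only [Set.mem_singleton_iff] at h; subst h; norm_num

lemma endpoint_side {a : Set ℚ} {x : ℚ} (hxa : x ∈ endpoints a) :
    x ∈ a ∨ LeftOf a x := by
  obtain ⟨n, f, ⟨hE, hmono, hmem⟩, i, hi, hfi⟩ := hxa
  rcases Nat.even_or_odd i with ⟨k, hk⟩ | ⟨k, hk⟩
  · -- i = 2k, left endpoint: x ∈ a
    left
    have hk2 : 2 * k < 2 * n := by omega
    have hk21 : 2 * k + 1 < 2 * n := by omega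
    have hfx : f (2 * k) = x := by rw [← hfi]; congr 1; omega
    have hlt : x < f (2 * k + 1) := by
      rw [← hfx]; exact hmono _ _ (by omega) hk21
    have h1 : f (2 * k + 1) ≤ 1 := (eset_bounds (hE _ hk21)).2
    have hxX : x ∈ Xset := by
      have := eset_bounds (hE _ hk2)
      rw [hfx] at this
      exact ⟨this.1, lt_of_lt_of_le hlt h1⟩
    exact (hmem x hxX).2 ⟨k, by omega, hfx.le, hlt⟩
  · -- i = 2k+1, right endpoint: LeftOf a x
    right
    have hk2 : 2 * k < 2 * n := by omega
    have hk21 : 2 * k + 1 < 2 * n := by omega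
    have hfx : f (2 * k + 1) = x := by rw [← hfi]; congr 1; omega
    refine ⟨f (2 * k), by rw [← hfx]; exact hmono _ _ (by omega) hk21, ?_⟩
    intro y h1 h2
    have h0 : (0 : ℚ) ≤ f (2 * k) := (eset_bounds (hE _ hk2)).1
    have hx1 : x ≤ 1 := by rw [← hfx]; exact (eset_bounds (hE _ hk21)).2
    have hyX : y ∈ Xset := ⟨le_of_lt (lt_of_le_of_lt h0 h1), lt_of_lt_of_le h2 hx1⟩
    exact (hmem y hyX).2 ⟨k, by omega, le_of_lt h1, by rw [hfx]; exact h2⟩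

lemma left_left {a b : Set ℚ} {x : ℚ} (ha : LeftOf a x) (hb : LeftOf b x)
    (hab : a ∩ b = ∅) : False := by
  obtain ⟨δ₁, h₁, ha⟩ := ha
  obtain ⟨δ₂, h₂, hb⟩ := hb
  set y := (max δ₁ δ₂ + x) / 2 with hy
  have hmx : max δ₁ δ₂ < x := max_lt h₁ h₂
  have hy1 : max δ₁ δ₂ < y := by rw [hy]; linarith
  have hy2 : y < x := by rw [hy]; linarith
  have : y ∈ a ∩ b :=
    ⟨ha y (lt_of_le_of_lt (le_max_left _ _) hy1) hy2,
     hb y (lt_of_le_of_lt (le_max_right _ _) hy1) hy2⟩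
  rw [hab] at this; exact this

/-- a point of `X ∪ {1}` is an endpoint of at most two members of
a pairwise disjoint family of nonempty good sets. -/
theorem endpoint_blocks_at_most_two (x : ℚ) (hx : x ∈ Eset)
    (A : Set (Set ℚ)) (hgood : ∀ a ∈ A, IsGood a ∧ a.Nonempty)
    (hdisj : ∀ a ∈ A, ∀ b ∈ A, a ≠ b → a ∩ b = ∅) :
    ∀ a ∈ A, ∀ b ∈ A, ∀ c ∈ A,
      x ∈ endpoints a → x ∈ endpoints b → x ∈ endpoints c →
      a = b ∨ a = c ∨ b = c := by
  intro a ha b hb c hc hxa hxb hxc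
  by_contra h
  push_neg at h
  obtain ⟨hab, hac, hbc⟩ := h
  have mem_mem : ∀ u ∈ A, ∀ v ∈ A, u ≠ v → x ∈ u → x ∈ v → False := by
    intro u hu v hv huv h1 h2
    have : x ∈ u ∩ v := ⟨h1, h2⟩
    rw [hdisj u hu v hv huv] at this; exact this
  rcases endpoint_side hxa with h1 | h1 <;>
  rcases endpoint_side hxb with h2 | h2 <;>
  rcases endpoint_side hxc with h3 | h3
  · exact mem_mem a ha b hb hab h1 h2
  · exact mem_mem a ha b hb hab h1 h2
  · exact mem_mem a ha c hc hac h1 h3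
  · exact left_left h2 h3 (hdisj b hb c hc hbc)
  · exact mem_mem b hb c hc hbc h2 h3
  · exact left_left h1 h3 (hdisj a ha c hc hac)
  · exact left_left h1 h2 (hdisj a ha b hb hab)
  · exact left_left h1 h2 (hdisj a ha b hb hab)
end

section
/- (Oscillation increment lemma) Let C be a countable atomless Boolean subalgebra of the interval algebra B. For every nonempty a, b ∈ C there exist a', b' ∈ C with a' ⊆ a, b' ⊆ b, and osc(a', b') = osc(a, b) + 1. -/
open Set

/-! ### Auxiliary: endpoint characterization -/

def Gap (s : Set ℚ) (p : ℚ) : Prop := ∃ q, q < p ∧ ∀ x ∈ s, ¬(q ≤ x ∧ x < p)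

def Tail (s : Set ℚ) (p : ℚ) : Prop :=
  ∃ q, 0 ≤ q ∧ q < p ∧ ∀ x, q ≤ x → x < p → x ∈ Xset → x ∈ s

def LeftEp (s : Set ℚ) (p : ℚ) : Prop := p ∈ s ∧ Gap s p

def RightEp (s : Set ℚ) (p : ℚ) : Prop := p ∉ s ∧ Tail s p

/-- rep-free endpoint set -/
def EP (s : Set ℚ) : Set ℚ := {p | p ∈ Eset ∧ (LeftEp s p ∨ RightEp s p)}

lemma Eset_nonneg {p : ℚ} (h : p ∈ Eset) : 0 ≤ p := by
  rcases h with h | h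
  · exact h.1
  · simp only [Set.mem_singleton_iff] at h; rw [h]; norm_num

lemma Eset_le_one {p : ℚ} (h : p ∈ Eset) : p ≤ 1 := by
  rcases h with h | h
  · exact le_of_lt h.2
  · simp only [Set.mem_singleton_iff] at h; rw [h]

lemma Eset_mem_Xset {p : ℚ} (h : p ∈ Eset) (h1 : p < 1) : p ∈ Xset := by
  rcases h with h | h
  · exact h
  · exfalso; simp only [Set.mem_singleton_iff] at h; rw [h] at h1; exact lt_irrefl 1 h1

lemma Xset_mem {x : ℚ} (h0 : 0 ≤ x) (h1 : x < 1) : x ∈ Xset := ⟨h0, h1⟩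
lemma goodSeq_mono {n : ℕ} {f : ℕ → ℚ} {s : Set ℚ} (hf : IsGoodSeq n f s)
    {i j : ℕ} (hij : i ≤ j) (hj : j < 2 * n) : f i ≤ f j := by
  rcases eq_or_lt_of_le hij with h | h
  · rw [h]
  · exact le_of_lt (hf.2.1 i j h hj)

lemma rep_leftEp {n : ℕ} {f : ℕ → ℚ} {s : Set ℚ} (hs : s ⊆ Xset)
    (hf : IsGoodSeq n f s) {l : ℕ} (hl : l < n) : LeftEp s (f (2 * l)) := by
  have h2l1 : 2 * l + 1 < 2 * n := by omega
  have h2l : 2 * l < 2 * n := by omega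
  have hlt : f (2 * l) < f (2 * l + 1) := hf.2.1 _ _ (by omega) h2l1
  have hle1 : f (2 * l + 1) ≤ 1 := Eset_le_one (hf.1 _ h2l1)
  have hXp : f (2 * l) ∈ Xset := ⟨Eset_nonneg (hf.1 _ h2l), lt_of_lt_of_le hlt hle1⟩
  have hmem : f (2 * l) ∈ s := (hf.2.2 _ hXp).mpr ⟨l, hl, le_refl _, hlt⟩
  refine ⟨hmem, ?_⟩
  rcases Nat.eq_zero_or_pos l with h0 | hpos
  · refine ⟨f (2 * l) - 1, by linarith, ?_⟩
    rintro x hx ⟨hqx, hxp⟩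
    obtain ⟨m, hm, hm1, hm2⟩ := (hf.2.2 x (hs hx)).mp hx
    have : f (2 * l) ≤ f (2 * m) := by
      subst h0; exact goodSeq_mono hf (by omega) (by omega)
    linarith
  · refine ⟨f (2 * l - 1), hf.2.1 _ _ (by omega) h2l, ?_⟩
    rintro x hx ⟨hqx, hxp⟩
    obtain ⟨m, hm, hm1, hm2⟩ := (hf.2.2 x (hs hx)).mp hx
    rcases lt_or_ge m l with hml | hml
    · have : f (2 * m + 1) ≤ f (2 * l - 1) := goodSeq_mono hf (by omega) (by omega)
      linarith
    · have : f (2 * l) ≤ f (2 * m) := goodSeq_mono hf (by omega) (by omega)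
      linarith

lemma rep_rightEp {n : ℕ} {f : ℕ → ℚ} {s : Set ℚ} (hs : s ⊆ Xset)
    (hf : IsGoodSeq n f s) {l : ℕ} (hl : l < n) : RightEp s (f (2 * l + 1)) := by
  have h2l1 : 2 * l + 1 < 2 * n := by omega
  constructor
  · intro hp
    obtain ⟨m, hm, hm1, hm2⟩ := (hf.2.2 _ (hs hp)).mp hp
    rcases lt_trichotomy m l with h | h | h
    · have : f (2 * m + 1) ≤ f (2 * l + 1) := goodSeq_mono hf (by omega) h2l1
      linarith
    · subst h; linarith
    · have : f (2 * l + 1) < f (2 * m) := hf.2.1 _ _ (by omega) (by omega)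
      linarith
  · refine ⟨f (2 * l), Eset_nonneg (hf.1 _ (by omega)), hf.2.1 _ _ (by omega) h2l1, ?_⟩
    intro x hqx hxp hxX
    exact (hf.2.2 x hxX).mpr ⟨l, hl, hqx, hxp⟩

lemma rep_left_eq {n : ℕ} {f : ℕ → ℚ} {s : Set ℚ} (hs : s ⊆ Xset)
    (hf : IsGoodSeq n f s) {p : ℚ} (h : LeftEp s p) : ∃ l, l < n ∧ p = f (2 * l) := by
  obtain ⟨hp, q, hq, hgap⟩ := h
  obtain ⟨l, hl, hl1, hl2⟩ := (hf.2.2 p (hs hp)).mp hp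
  refine ⟨l, hl, ?_⟩
  by_contra hne
  have hlt : f (2 * l) < p := lt_of_le_of_ne hl1 (fun h => hne h.symm)
  set r := max q (f (2 * l)) with hr
  have hrp : r < p := max_lt hq hlt
  have hrX : r ∈ Xset := by
    constructor
    · exact le_trans (Eset_nonneg (hf.1 _ (by omega))) (le_max_right _ _)
    · exact lt_trans hrp (hs hp).2
  have hrs : r ∈ s := (hf.2.2 r hrX).mpr ⟨l, hl, le_max_right _ _, lt_trans hrp hl2⟩
  exact hgap r hrs ⟨le_max_left _ _, hrp⟩
lemma rep_right_eq {n : ℕ} {f : ℕ → ℚ} {s : Set ℚ} (hs : s ⊆ Xset)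
    (hf : IsGoodSeq n f s) {p : ℚ} (hpe : p ∈ Eset) (h : RightEp s p) :
    ∃ l, l < n ∧ p = f (2 * l + 1) := by
  obtain ⟨hps, q, hq0, hqp, htail⟩ := h
  classical
  set T : Finset ℚ := insert q (((Finset.range (2 * n)).image f).filter (fun y => y < p)) with hT
  have hqT : q ∈ T := Finset.mem_insert_self _ _
  set x₀ := T.max' ⟨q, hqT⟩ with hx₀
  have hallT : ∀ y ∈ T, y < p := by
    intro y hy
    rcases Finset.mem_insert.mp hy with h | h
    · rw [h]; exact hqp
    · exact (Finset.mem_filter.mp h).2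
  have hx₀p : x₀ < p := hallT _ (T.max'_mem _)
  have hqx₀ : q ≤ x₀ := T.le_max' q hqT
  have hfx₀ : ∀ j, j < 2 * n → f j < p → f j ≤ x₀ := by
    intro j hj hjp
    exact T.le_max' _ (Finset.mem_insert_of_mem (Finset.mem_filter.mpr
      ⟨Finset.mem_image.mpr ⟨j, Finset.mem_range.mpr hj, rfl⟩, hjp⟩))
  set x₁ := (x₀ + p) / 2 with hx₁
  have hx₀x₁ : x₀ < x₁ := by rw [hx₁]; linarith
  have hx₁p : x₁ < p := by rw [hx₁]; linarith
  have hx₁X : x₁ ∈ Xset := ⟨by linarith, lt_of_lt_of_le hx₁p (Eset_le_one hpe)⟩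
  have hx₁s : x₁ ∈ s := htail x₁ (by linarith) hx₁p hx₁X
  obtain ⟨l, hl, hl1, hl2⟩ := (hf.2.2 x₁ hx₁X).mp hx₁s
  have hge : p ≤ f (2 * l + 1) := by
    by_contra hlt
    push_neg at hlt
    have := hfx₀ (2 * l + 1) (by omega) hlt
    linarith
  rcases eq_or_lt_of_le hge with heq | hlt
  · exact ⟨l, hl, heq⟩
  · exfalso
    have hp1 : p < 1 := lt_of_lt_of_le hlt (Eset_le_one (hf.1 _ (by omega)))
    have hpX : p ∈ Xset := Eset_mem_Xset hpe hp1
    exact hps ((hf.2.2 p hpX).mpr ⟨l, hl, by linarith, hlt⟩)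

lemma rep_tail {n : ℕ} {f : ℕ → ℚ} {s : Set ℚ} (hs : s ⊆ Xset)
    (hf : IsGoodSeq n f s) {p : ℚ} (hpe : p ∈ Eset)
    (hcof : ∀ q, q < p → ∃ x, x ∈ s ∧ q ≤ x ∧ x < p) : Tail s p := by
  classical
  set T : Finset ℚ := insert (p - 1) (((Finset.range (2 * n)).image f).filter (fun y => y < p)) with hT
  have hqT : p - 1 ∈ T := Finset.mem_insert_self _ _
  set x₀ := T.max' ⟨_, hqT⟩ with hx₀
  have hallT : ∀ y ∈ T, y < p := by
    intro y hy
    rcases Finset.mem_insert.mp hy with h | h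
    · rw [h]; linarith
    · exact (Finset.mem_filter.mp h).2
  have hx₀p : x₀ < p := hallT _ (T.max'_mem _)
  have hfx₀ : ∀ j, j < 2 * n → f j < p → f j ≤ x₀ := by
    intro j hj hjp
    exact T.le_max' _ (Finset.mem_insert_of_mem (Finset.mem_filter.mpr
      ⟨Finset.mem_image.mpr ⟨j, Finset.mem_range.mpr hj, rfl⟩, hjp⟩))
  obtain ⟨x, hxs, hx₀x, hxp⟩ := hcof x₀ hx₀p
  obtain ⟨l, hl, hl1, hl2⟩ := (hf.2.2 x (hs hxs)).mp hxs
  have hge : p ≤ f (2 * l + 1) := by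
    by_contra hlt
    push_neg at hlt
    have := hfx₀ (2 * l + 1) (by omega) hlt
    linarith
  refine ⟨x, (hs hxs).1, hxp, ?_⟩
  intro y hxy hyp hyX
  exact (hf.2.2 y hyX).mpr ⟨l, hl, by linarith, by linarith⟩

lemma not_cof_gap {s : Set ℚ} {p : ℚ}
    (h : ¬ ∀ q, q < p → ∃ x, x ∈ s ∧ q ≤ x ∧ x < p) : Gap s p := by
  push_neg at h
  obtain ⟨q, hq, hx⟩ := h
  refine ⟨q, hq, ?_⟩
  rintro x hxs ⟨h1, h2⟩
  exact absurd h2 (not_lt.mpr (hx x hxs h1))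

lemma tail_cof {s : Set ℚ} {p : ℚ} (hpe : p ∈ Eset) (ht : Tail s p) :
    ∀ q, q < p → ∃ x, x ∈ s ∧ q ≤ x ∧ x < p := by
  obtain ⟨q0, h0, hq0p, htail⟩ := ht
  intro q hq
  set x := max q q0 with hx
  have hxp : x < p := max_lt hq hq0p
  have hxX : x ∈ Xset := ⟨le_trans h0 (le_max_right _ _), lt_of_lt_of_le hxp (Eset_le_one hpe)⟩
  exact ⟨x, htail x (le_max_right _ _) hxp hxX, le_max_left _ _, hxp⟩
lemma endpoints_subset_EP {s : Set ℚ} (hs : s ⊆ Xset) : endpoints s ⊆ EP s := by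
  rintro p ⟨n, f, hf, i, hi, rfl⟩
  refine ⟨hf.1 i hi, ?_⟩
  rcases Nat.even_or_odd i with ⟨l, hl⟩ | ⟨l, hl⟩
  · subst hl
    have : 2 * l = l + l := by omega
    rw [← this] at *
    exact Or.inl (rep_leftEp hs hf (by omega))
  · subst hl
    have : 2 * l + 1 = l + l + 1 := by omega
    rw [← this] at *
    exact Or.inr (rep_rightEp hs hf (by omega))

lemma EP_subset_endpoints {s : Set ℚ} (hgood : IsGood s) : EP s ⊆ endpoints s := by
  obtain ⟨hs, n, f, hf⟩ := hgood
  rintro p ⟨hpe, h | h⟩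
  · obtain ⟨l, hl, hpl⟩ := rep_left_eq hs hf h
    exact ⟨n, f, hf, 2 * l, by omega, hpl.symm⟩
  · obtain ⟨l, hl, hpl⟩ := rep_right_eq hs hf hpe h
    exact ⟨n, f, hf, 2 * l + 1, by omega, hpl.symm⟩

lemma endpoints_eq_EP {s : Set ℚ} (hgood : IsGood s) : endpoints s = EP s :=
  Set.Subset.antisymm (endpoints_subset_EP hgood.1) (EP_subset_endpoints hgood)

lemma EP_finite {s : Set ℚ} (hgood : IsGood s) : (EP s).Finite := by
  obtain ⟨hs, n, f, hf⟩ := hgood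
  apply Set.Finite.subset (((Finset.range (2 * n)).image f).finite_toSet)
  rintro p ⟨hpe, h | h⟩
  · obtain ⟨l, hl, hpl⟩ := rep_left_eq hs hf h
    simp only [Finset.coe_image, Set.mem_image, Finset.mem_coe, Finset.mem_range]
    exact ⟨2 * l, by omega, hpl.symm⟩
  · obtain ⟨l, hl, hpl⟩ := rep_right_eq hs hf hpe h
    simp only [Finset.coe_image, Set.mem_image, Finset.mem_coe, Finset.mem_range]
    exact ⟨2 * l + 1, by omega, hpl.symm⟩

lemma EP_nonempty {s : Set ℚ} (hgood : IsGood s) (hne : s ≠ ∅) : (EP s).Nonempty := by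
  obtain ⟨hs, n, f, hf⟩ := hgood
  rcases Nat.eq_zero_or_pos n with h0 | hpos
  · exfalso
    apply hne
    ext x
    simp only [Set.mem_empty_iff_false, iff_false]
    intro hx
    obtain ⟨i, hi, -⟩ := (hf.2.2 x (hs hx)).mp hx
    omega
  · exact ⟨f 0, endpoints_subset_EP hs ⟨n, f, hf, 0, by omega, rfl⟩⟩

lemma good_empty : IsGood (∅ : Set ℚ) := by
  refine ⟨Set.empty_subset _, 0, fun _ => 0, ?_, ?_, ?_⟩
  · intro i hi; omega
  · intro i j _ hj; omega
  · intro x _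
    simp only [Set.mem_empty_iff_false, false_iff]
    rintro ⟨i, hi, -⟩; omega

lemma EP_empty : EP (∅ : Set ℚ) = ∅ := by
  ext p
  simp only [EP, Set.mem_setOf_eq, Set.mem_empty_iff_false, iff_false]
  rintro ⟨hpe, ⟨hp, -⟩ | ⟨-, q, h0, hqp, ht⟩⟩
  · exact hp
  · exact ht q le_rfl hqp ⟨h0, lt_of_lt_of_le hqp (Eset_le_one hpe)⟩

lemma intS_eq_image_EP {s : Set ℚ} (e : ℚ → ℕ) (hgood : IsGood s) :
    intS e s = e '' EP s := by rw [intS, endpoints_eq_EP hgood]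
lemma EP_union_subset {u v : Set ℚ} (hu : IsGood u) (hv : IsGood v) :
    EP (u ∪ v) ⊆ EP u ∪ EP v := by
  rintro p ⟨hpe, hL | hR⟩
  · obtain ⟨hp, q, hq, hgap⟩ := hL
    rcases hp with hp | hp
    · exact Or.inl ⟨hpe, Or.inl ⟨hp, q, hq, fun x hx => hgap x (Or.inl hx)⟩⟩
    · exact Or.inr ⟨hpe, Or.inl ⟨hp, q, hq, fun x hx => hgap x (Or.inr hx)⟩⟩
  · obtain ⟨hp, q, h0, hqp, ht⟩ := hR
    have hpu : p ∉ u := fun h => hp (Or.inl h)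
    have hpv : p ∉ v := fun h => hp (Or.inr h)
    by_cases hcof : ∀ r, r < p → ∃ x, x ∈ u ∧ r ≤ x ∧ x < p
    · obtain ⟨n, f, hf⟩ := hu.2
      exact Or.inl ⟨hpe, Or.inr ⟨hpu, rep_tail hu.1 hf hpe hcof⟩⟩
    · obtain ⟨q₁, hq₁, hgap₁⟩ := not_cof_gap hcof
      refine Or.inr ⟨hpe, Or.inr ⟨hpv, max q q₁, le_trans h0 (le_max_left _ _),
        max_lt hqp hq₁, ?_⟩⟩
      intro x hx1 hx2 hx3
      rcases ht x (le_trans (le_max_left _ _) hx1) hx2 hx3 with h | h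
      · exact absurd ⟨le_trans (le_max_right _ _) hx1, hx2⟩ (hgap₁ x h)
      · exact h

lemma EP_union_left {u v : Set ℚ} (hu : IsGood u) (hv : IsGood v)
    (hd : ∀ x, x ∈ u → x ∈ v → False) (hnv : ∀ p, p ∈ EP u → p ∉ EP v) :
    EP u ⊆ EP (u ∪ v) := by
  rintro p hpEP
  obtain ⟨hpe, hL | hR⟩ := hpEP
  · obtain ⟨hp, q, hq, hgap⟩ := hL
    have hpv : p ∉ v := fun h => hd p hp h
    have hgv : Gap v p := by
      by_cases hcof : ∀ r, r < p → ∃ x, x ∈ v ∧ r ≤ x ∧ x < p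
      · exfalso
        obtain ⟨n, f, hf⟩ := hv.2
        exact hnv p ⟨hpe, Or.inl ⟨hp, q, hq, hgap⟩⟩ ⟨hpe, Or.inr ⟨hpv, rep_tail hv.1 hf hpe hcof⟩⟩
      · exact not_cof_gap hcof
    obtain ⟨q₂, hq₂, hgap₂⟩ := hgv
    refine ⟨hpe, Or.inl ⟨Or.inl hp, max q q₂, max_lt hq hq₂, ?_⟩⟩
    rintro x hx ⟨h1, h2⟩
    rcases hx with hx | hx
    · exact hgap x hx ⟨le_trans (le_max_left _ _) h1, h2⟩
    · exact hgap₂ x hx ⟨le_trans (le_max_right _ _) h1, h2⟩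
  · obtain ⟨hp, q, h0, hqp, ht⟩ := hR
    have hpv : p ∉ v := by
      intro hpinv
      apply hnv p ⟨hpe, Or.inr ⟨hp, q, h0, hqp, ht⟩⟩
      refine ⟨hpe, Or.inl ⟨hpinv, q, hqp, ?_⟩⟩
      rintro x hxv ⟨h1, h2⟩
      exact hd x (ht x h1 h2 (hv.1 hxv)) hxv
    refine ⟨hpe, Or.inr ⟨?_, q, h0, hqp, fun x h1 h2 h3 => Or.inl (ht x h1 h2 h3)⟩⟩
    rintro (h | h)
    · exact hp h
    · exact hpv h

lemma EP_union_eq {u v : Set ℚ} (hu : IsGood u) (hv : IsGood v)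
    (hd : u ∩ v = ∅) (hep : EP u ∩ EP v = ∅) :
    EP (u ∪ v) = EP u ∪ EP v := by
  have hd' : ∀ x, x ∈ u → x ∈ v → False := by
    intro x h1 h2
    have : x ∈ u ∩ v := ⟨h1, h2⟩
    rw [hd] at this
    exact this
  have hep1 : ∀ p, p ∈ EP u → p ∉ EP v := by
    intro p h1 h2
    have : p ∈ EP u ∩ EP v := ⟨h1, h2⟩
    rw [hep] at this
    exact this
  have hep2 : ∀ p, p ∈ EP v → p ∉ EP u := fun p h1 h2 => hep1 p h2 h1
  apply Set.Subset.antisymm (EP_union_subset hu hv)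
  rintro p (h | h)
  · exact EP_union_left hu hv hd' hep1 h
  · rw [Set.union_comm]
    exact EP_union_left hv hu (fun x a b => hd' x b a) hep2 h
lemma leftEp_unique {d₁ d₂ : Set ℚ} {p : ℚ} (hd : d₁ ∩ d₂ = ∅)
    (h1 : LeftEp d₁ p) (h2 : LeftEp d₂ p) : False := by
  have : p ∈ d₁ ∩ d₂ := ⟨h1.1, h2.1⟩
  rw [hd] at this; exact this

lemma rightEp_unique {d₁ d₂ : Set ℚ} {p : ℚ} (hpe : p ∈ Eset) (hd : d₁ ∩ d₂ = ∅)
    (h1 : RightEp d₁ p) (h2 : RightEp d₂ p) : False := by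
  obtain ⟨-, q₁, h01, hq1, ht1⟩ := h1
  obtain ⟨-, q₂, h02, hq2, ht2⟩ := h2
  set r := max q₁ q₂ with hr
  have hrp : r < p := max_lt hq1 hq2
  have hrX : r ∈ Xset := ⟨le_trans h01 (le_max_left _ _), lt_of_lt_of_le hrp (Eset_le_one hpe)⟩
  have : r ∈ d₁ ∩ d₂ :=
    ⟨ht1 r (le_max_left _ _) hrp hrX, ht2 r (le_max_right _ _) hrp hrX⟩
  rw [hd] at this; exact this

lemma F_finite {e : ℚ → ℕ} (he : FinToOne e) (M : ℕ) :
    {x | x ∈ Eset ∧ e x ≤ M}.Finite := by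
  apply Set.Finite.subset (Set.Finite.biUnion (Finset.range (M + 1)).finite_toSet
    (fun m _ => he m))
  rintro x ⟨hx, hle⟩
  exact Set.mem_biUnion (Finset.mem_coe.mpr (Finset.mem_range.mpr (by omega))) ⟨hx, rfl⟩

lemma disjoint_pieces {C : Set (Set ℚ)} (hC : IsSubalg C) (hCat : IsAtomlessAlg C) :
    ∀ K : ℕ, ∀ c ∈ C, c ≠ ∅ → ∃ L : List (Set ℚ), L.length = K ∧
      (∀ d ∈ L, d ∈ C ∧ d ≠ ∅ ∧ d ⊆ c) ∧ L.Pairwise (fun x y => x ∩ y = ∅) := by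
  intro K
  induction K with
  | zero => exact fun c _ _ => ⟨[], rfl, by simp, List.Pairwise.nil⟩
  | succ K ih =>
    intro c hc hne
    obtain ⟨d, hd, hdne, hdc⟩ := hCat c hc hne
    have hcX : c ⊆ Xset := (hC.1 c hc).1
    set c' := c ∩ (Xset \ d) with hc'
    have hc'C : c' ∈ C := hC.2.2.2.2.1 c hc _ (hC.2.2.2.2.2 d hd)
    have hc'ne : c' ≠ ∅ := by
      obtain ⟨x, hxc, hxd⟩ := Set.exists_of_ssubset hdc
      intro h
      have : x ∈ c' := ⟨hxc, hcX hxc, hxd⟩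
      rw [h] at this; exact this
    obtain ⟨L, hlen, hmem, hpair⟩ := ih c' hc'C hc'ne
    refine ⟨d :: L, by simp [hlen], ?_, ?_⟩
    · intro x hx
      rcases List.mem_cons.mp hx with h | h
      · subst h; exact ⟨hd, hdne, hdc.1⟩
      · obtain ⟨h1, h2, h3⟩ := hmem x h
        exact ⟨h1, h2, h3.trans (Set.inter_subset_left)⟩
    · refine List.Pairwise.cons ?_ hpair
      intro y hy
      ext x
      simp only [Set.mem_inter_iff, Set.mem_empty_iff_false, iff_false]
      rintro ⟨hxd, hxy⟩
      exact ((hmem y hy).2.2 hxy).2.2 hxd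
lemma shrink_high {e : ℚ → ℕ} (he : FinToOne e) {C : Set (Set ℚ)}
    (hC : IsSubalg C) (hCat : IsAtomlessAlg C) {c : Set ℚ} (hc : c ∈ C)
    (hne : c ≠ ∅) (M : ℕ) :
    ∃ d ∈ C, d ≠ ∅ ∧ d ⊆ c ∧ (∃ x, x ∈ c ∧ x ∉ d) ∧ ∀ p ∈ EP d, M < e p := by
  classical
  have hFfin := F_finite he M
  set Fin := hFfin.toFinset with hFin
  set K := 2 * Fin.card + 2 with hK
  obtain ⟨L, hlen, hmem, hpair⟩ := disjoint_pieces hC hCat K c hc hne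
  -- pairwise disjointness for distinct members
  have hdisj : ∀ d₁ ∈ L, ∀ d₂ ∈ L, d₁ ≠ d₂ → d₁ ∩ d₂ = ∅ := by
    intro d₁ h₁ d₂ h₂ hne'
    haveI : Std.Symm (fun x y : Set ℚ => x ∩ y = ∅) := ⟨fun x y h => by rw [Set.inter_comm]; exact h⟩
    exact hpair.forall h₁ h₂ hne'
  have hnodup : L.Nodup := by
    apply List.Pairwise.imp_of_mem ?_ hpair
    intro x y hx hy hxy
    intro hEq
    subst hEq
    have := (hmem x hx).2.1
    rw [Set.inter_self] at hxy
    exact this hxy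
  -- find a piece avoiding F
  have hmain : ∃ d ∈ L, ∀ p, p ∈ EP d → p ∉ Fin := by
    by_contra hcon
    push_neg at hcon
    set S := L.toFinset with hS
    have hScard : S.card = K := by rw [hS, List.toFinset_card_of_nodup hnodup, hlen]
    have h2 : ∀ d : Set ℚ, ∃ p : ℚ, d ∈ S → (p ∈ EP d ∧ p ∈ Fin) := by
      intro d
      by_cases hd : d ∈ S
      · obtain ⟨p, hp1, hp2⟩ := hcon d (List.mem_toFinset.mp hd)
        exact ⟨p, fun _ => ⟨hp1, hp2⟩⟩
      · exact ⟨0, fun h => absurd h hd⟩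
    choose g hg using h2
    set g' : Set ℚ → ℚ × Bool := fun d => (g d, if LeftEp d (g d) then true else false) with hg'
    have hmapsto : ∀ d ∈ S, g' d ∈ Fin ×ˢ (Finset.univ : Finset Bool) := by
      intro d hd
      exact Finset.mem_product.mpr ⟨(hg d hd).2, Finset.mem_univ _⟩
    have hinj : Set.InjOn g' ↑S := by
      intro d₁ h₁ d₂ h₂ hEq
      by_contra hne'
      have hL₁ : d₁ ∈ L := List.mem_toFinset.mp h₁
      have hL₂ : d₂ ∈ L := List.mem_toFinset.mp h₂
      have hdd : d₁ ∩ d₂ = ∅ := hdisj _ hL₁ _ hL₂ hne'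
      have hp : g d₁ = g d₂ := congrArg Prod.fst hEq
      have hb := congrArg Prod.snd hEq
      simp only [hg'] at hb
      obtain ⟨hEP₁, hF₁⟩ := hg d₁ h₁
      obtain ⟨hEP₂, hF₂⟩ := hg d₂ h₂
      obtain ⟨hpe₁, hside₁⟩ := hEP₁
      obtain ⟨hpe₂, hside₂⟩ := hEP₂
      rw [hp] at hside₁ hpe₁
      set p := g d₂ with hpd
      rw [hp] at hb
      rcases hside₁ with hL1 | hR1 <;> rcases hside₂ with hL2 | hR2
      · exact leftEp_unique hdd hL1 hL2
      · rw [if_pos hL1, if_neg (fun h : LeftEp d₂ p => hR2.1 h.1)] at hb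
        exact Bool.noConfusion hb
      · rw [if_neg (fun h : LeftEp d₁ p => hR1.1 h.1), if_pos hL2] at hb
        exact Bool.noConfusion hb
      · exact rightEp_unique hpe₂ hdd hR1 hR2
    have := Finset.card_le_card_of_injOn g' hmapsto hinj
    rw [hScard, Finset.card_product, Finset.card_univ] at this
    simp only [Fintype.card_bool] at this
    omega
  obtain ⟨d, hdL, hdF⟩ := hmain
  obtain ⟨hdC, hdne, hdc⟩ := hmem d hdL
  -- a second piece for nonemptiness of c \ d
  have hsecond : ∃ x, x ∈ c ∧ x ∉ d := by
    have h0 : 0 < L.length := by omega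
    have h1 : 1 < L.length := by omega
    set e₀ := L.get ⟨0, h0⟩ with he₀
    set e₁ := L.get ⟨1, h1⟩ with he₁
    have hne01 : e₀ ≠ e₁ := by
      intro h
      have := (List.Nodup.get_inj_iff hnodup).mp h
      simp at this
    have hmem₀ : e₀ ∈ L := by rw [he₀]; exact L.get_mem _
    have hmem₁ : e₁ ∈ L := by rw [he₁]; exact L.get_mem _
    obtain ⟨d', hd'L, hd'ne⟩ : ∃ d' ∈ L, d' ≠ d := by
      by_cases h : e₀ = d
      · exact ⟨e₁, hmem₁, fun hh => hne01 (h.trans hh.symm)⟩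
      · exact ⟨e₀, hmem₀, h⟩
    obtain ⟨x, hx⟩ := Set.nonempty_iff_ne_empty.mpr (hmem d' hd'L).2.1
    refine ⟨x, (hmem d' hd'L).2.2 hx, ?_⟩
    intro hxd
    have : x ∈ d' ∩ d := ⟨hx, hxd⟩
    rw [hdisj d' hd'L d hdL hd'ne] at this
    exact this
  refine ⟨d, hdC, hdne, hdc, hsecond, ?_⟩
  intro p hp
  have hpe : p ∈ Eset := hp.1
  have := hdF p hp
  rw [Set.Finite.mem_toFinset] at this
  by_contra hle
  push_neg at hle
  exact this ⟨hpe, hle⟩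
lemma seq_pieces {e : ℚ → ℕ} (he : FinToOne e) {C : Set (Set ℚ)}
    (hC : IsSubalg C) (hCat : IsAtomlessAlg C) :
    ∀ t : ℕ, ∀ M : ℕ, ∀ a ∈ C, ∀ b ∈ C, a ≠ ∅ → b ≠ ∅ →
    ∃ d : ℕ → Set ℚ,
      (∀ i < t, d i ∈ C ∧ d i ≠ ∅) ∧
      (∀ i < t, Even i → d i ⊆ a) ∧
      (∀ i < t, ¬Even i → d i ⊆ b) ∧
      (∀ i < t, ∀ j < t, i ≠ j → (Even i ↔ Even j) → d i ∩ d j = ∅) ∧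
      (∀ i < t, ∀ p ∈ EP (d i), M < e p) ∧
      (∀ i < t, ∀ j < t, i < j → ∀ p ∈ EP (d i), ∀ q ∈ EP (d j), e p < e q) := by
  intro t
  induction t with
  | zero =>
    intro M a _ b _ _ _
    exact ⟨fun _ => ∅, fun i hi => by omega, fun i hi => by omega, fun i hi => by omega,
      fun i hi => by omega, fun i hi => by omega, fun i hi => by omega⟩
  | succ t ih =>
    intro M a ha b hb hane hbne
    obtain ⟨d₀, hd₀C, hd₀ne, hd₀a, ⟨x, hxa, hxd₀⟩, hd₀M⟩ := shrink_high he hC hCat ha hane M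
    have haX : a ⊆ Xset := (hC.1 a ha).1
    set a'' := a ∩ (Xset \ d₀) with ha''
    have ha''C : a'' ∈ C := hC.2.2.2.2.1 a ha _ (hC.2.2.2.2.2 d₀ hd₀C)
    have ha''ne : a'' ≠ ∅ := by
      intro h
      have : x ∈ a'' := ⟨hxa, haX hxa, hxd₀⟩
      rw [h] at this; exact this
    have hE₀fin : (EP d₀).Finite := EP_finite (hC.1 d₀ hd₀C)
    have hE₀ne : (EP d₀).Nonempty := EP_nonempty (hC.1 d₀ hd₀C) hd₀ne
    obtain ⟨p₀, hp₀⟩ := hE₀ne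
    set T₀ := (hE₀fin.image e).toFinset with hT₀
    have hp₀T : e p₀ ∈ T₀ := by
      rw [hT₀, Set.Finite.mem_toFinset]; exact ⟨p₀, hp₀, rfl⟩
    set M₁ := T₀.max' ⟨_, hp₀T⟩ with hM₁def
    have hM₁ : ∀ p ∈ EP d₀, e p ≤ M₁ := by
      intro p hp
      apply T₀.le_max'
      rw [hT₀, Set.Finite.mem_toFinset]; exact ⟨p, hp, rfl⟩
    have hMM₁ : M < M₁ := lt_of_lt_of_le (hd₀M p₀ hp₀) (hM₁ p₀ hp₀)
    obtain ⟨d', h1, h2, h3, h4, h5, h6⟩ := ih M₁ b hb a'' ha''C hbne ha''ne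
    refine ⟨fun i => match i with | 0 => d₀ | (j+1) => d' j, ?_, ?_, ?_, ?_, ?_, ?_⟩
    · intro i hi
      match i with
      | 0 => exact ⟨hd₀C, hd₀ne⟩
      | (j+1) => exact h1 j (by omega)
    · intro i hi hev
      match i with
      | 0 => exact hd₀a
      | (j+1) =>
        have : ¬ Even j := by rw [← Nat.even_add_one]; exact hev
        exact (h3 j (by omega) this).trans (Set.inter_subset_left)
    · intro i hi hev
      match i with
      | 0 => exact absurd (⟨0, rfl⟩ : Even 0) hev
      | (j+1) =>
        have : Even j := by
          by_contra h
          exact hev (Nat.even_add_one.mpr h)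
        exact h2 j (by omega) this
    · intro i hi j hj hij hpar
      match i, j with
      | 0, 0 => exact absurd rfl hij
      | 0, (j+1) =>
        have hjodd : ¬ Even j := by
          rw [← Nat.even_add_one]; exact hpar.mp (⟨0, rfl⟩ : Even 0)
        have hsub := (h3 j (by omega) hjodd)
        ext y
        simp only [Set.mem_inter_iff, Set.mem_empty_iff_false, iff_false]
        rintro ⟨hy0, hy1⟩
        exact (hsub hy1).2.2 hy0
      | (i+1), 0 =>
        have hiodd : ¬ Even i := by
          rw [← Nat.even_add_one]; exact hpar.mpr (⟨0, rfl⟩ : Even 0)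
        have hsub := (h3 i (by omega) hiodd)
        ext y
        simp only [Set.mem_inter_iff, Set.mem_empty_iff_false, iff_false]
        rintro ⟨hy0, hy1⟩
        exact (hsub hy0).2.2 hy1
      | (i+1), (j+1) =>
        refine h4 i (by omega) j (by omega) (by omega) ?_
        simp only [Nat.even_add_one] at hpar
        tauto
    · intro i hi p hp
      match i with
      | 0 => exact hd₀M p hp
      | (j+1) => exact lt_trans hMM₁ (h5 j (by omega) p hp)
    · intro i hi j hj hij p hp q hq
      match i, j with
      | 0, 0 => omega
      | (i+1), 0 => omega
      | 0, (j+1) => exact lt_of_le_of_lt (hM₁ p hp) (h5 j (by omega) q hq)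
      | (i+1), (j+1) => exact h6 i (by omega) j (by omega) (by omega) p hp q hq
lemma assemble {C : Set (Set ℚ)} (hC : IsSubalg C) (d : ℕ → Set ℚ) :
    ∀ s : Finset ℕ, (∀ i ∈ s, d i ∈ C) →
    (∀ i ∈ s, ∀ j ∈ s, i ≠ j → d i ∩ d j = ∅ ∧ EP (d i) ∩ EP (d j) = ∅) →
    (⋃ i ∈ s, d i) ∈ C ∧ EP (⋃ i ∈ s, d i) = ⋃ i ∈ s, EP (d i) := by
  classical
  intro s
  induction s using Finset.induction_on with
  | empty =>
    intro _ _
    simp only [Finset.notMem_empty, Set.iUnion_of_empty, Set.iUnion_empty]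
    exact ⟨hC.2.1, EP_empty⟩
  | @insert j s hj ih =>
    intro hmem hdisj
    have hmem' : ∀ i ∈ s, d i ∈ C := fun i hi => hmem i (Finset.mem_insert_of_mem hi)
    have hdisj' : ∀ i ∈ s, ∀ k ∈ s, i ≠ k → d i ∩ d k = ∅ ∧ EP (d i) ∩ EP (d k) = ∅ :=
      fun i hi k hk hik =>
        hdisj i (Finset.mem_insert_of_mem hi) k (Finset.mem_insert_of_mem hk) hik
    obtain ⟨hUC, hUE⟩ := ih hmem' hdisj'
    rw [Finset.set_biUnion_insert, Finset.set_biUnion_insert]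
    have hdjC : d j ∈ C := hmem j (Finset.mem_insert_self _ _)
    have hC1 : (d j ∪ ⋃ i ∈ s, d i) ∈ C := hC.2.2.2.1 _ hdjC _ hUC
    refine ⟨hC1, ?_⟩
    have hset : d j ∩ (⋃ i ∈ s, d i) = ∅ := by
      ext y
      simp only [Set.mem_inter_iff, Set.mem_iUnion, Set.mem_empty_iff_false, iff_false,
        not_and, not_exists]
      rintro hyj i hi hyi
      have hji : j ≠ i := fun h => hj (h ▸ hi)
      have := (hdisj j (Finset.mem_insert_self _ _) i (Finset.mem_insert_of_mem hi) hji).1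
      have : y ∈ d j ∩ d i := ⟨hyj, hyi⟩
      rw [(hdisj j (Finset.mem_insert_self _ _) i (Finset.mem_insert_of_mem hi) hji).1] at this
      exact this
    have hep : EP (d j) ∩ EP (⋃ i ∈ s, d i) = ∅ := by
      rw [hUE]
      ext y
      simp only [Set.mem_inter_iff, Set.mem_iUnion, Set.mem_empty_iff_false, iff_false,
        not_and, not_exists]
      rintro hyj i hi hyi
      have hji : j ≠ i := fun h => hj (h ▸ hi)
      have : y ∈ EP (d j) ∩ EP (d i) := ⟨hyj, hyi⟩
      rw [(hdisj j (Finset.mem_insert_self _ _) i (Finset.mem_insert_of_mem hi) hji).2] at this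
      exact this
    rw [EP_union_eq (hC.1 _ hdjC) (hC.1 _ hUC) hset hep, hUE]
lemma osc_count (e : ℚ → ℕ) (a' b' : Set ℚ) (t : ℕ) (E : ℕ → Set ℕ)
    (hne : ∀ i < t, (E i).Nonempty)
    (hord : ∀ i < t, ∀ j < t, i < j → ∀ x ∈ E i, ∀ y ∈ E j, x < y)
    (hA : ∀ x, x ∈ intS e a' ↔ ∃ i, i < t ∧ Even i ∧ x ∈ E i)
    (hB : ∀ x, x ∈ intS e b' ↔ ∃ i, i < t ∧ ¬Even i ∧ x ∈ E i) :
    {i | OscAt e a' b' i}.ncard = t := by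
  classical
  set m : ℕ → ℕ := fun i => sInf (E i) with hm
  have hmmem : ∀ i < t, m i ∈ E i := fun i hi => Nat.sInf_mem (hne i hi)
  have hmle : ∀ i < t, ∀ x ∈ E i, m i ≤ x := fun i _ x hx => Nat.sInf_le hx
  -- uniqueness of block
  have huniq : ∀ i < t, ∀ j < t, ∀ x, x ∈ E i → x ∈ E j → i = j := by
    intro i hi j hj x hxi hxj
    rcases lt_trichotomy i j with h | h | h
    · exact absurd (hord i hi j hj h x hxi x hxj) (lt_irrefl x)
    · exact h
    · exact absurd (hord j hj i hi h x hxj x hxi) (lt_irrefl x)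
  have hdisjAB : ∀ x, x ∈ intS e a' → x ∈ intS e b' → False := by
    intro x hxa hxb
    obtain ⟨i, hi, hiev, hxi⟩ := (hA x).mp hxa
    obtain ⟨j, hj, hjodd, hxj⟩ := (hB x).mp hxb
    exact hjodd (huniq i hi j hj x hxi hxj ▸ hiev)
  have hsymm : ∀ x, x ∈ symmDiff (intS e a') (intS e b') ↔ ∃ i, i < t ∧ x ∈ E i := by
    intro x
    rw [Set.mem_symmDiff]
    constructor
    · rintro (⟨h, -⟩ | ⟨h, -⟩)
      · obtain ⟨i, hi, -, hxi⟩ := (hA x).mp h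
        exact ⟨i, hi, hxi⟩
      · obtain ⟨i, hi, -, hxi⟩ := (hB x).mp h
        exact ⟨i, hi, hxi⟩
    · rintro ⟨i, hi, hxi⟩
      by_cases hev : Even i
      · exact Or.inl ⟨(hA x).mpr ⟨i, hi, hev, hxi⟩, fun h => hdisjAB x ((hA x).mpr ⟨i, hi, hev, hxi⟩) h⟩
      · exact Or.inr ⟨(hB x).mpr ⟨i, hi, hev, hxi⟩, fun h => hdisjAB x h ((hB x).mpr ⟨i, hi, hev, hxi⟩)⟩
  -- claim 1 : each m i is an oscillation point
  have hclaim1 : ∀ i < t, OscAt e a' b' (m i) := by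
    intro i hi
    have hmi : m i ∈ E i := hmmem i hi
    -- the maximality analysis, independent of parity
    have key : ∀ j, j < m i → j ∈ symmDiff (intS e a') (intS e b') →
        (∀ j', j < j' → j' < m i → j' ∉ symmDiff (intS e a') (intS e b')) →
        (1 ≤ i ∧ j ∈ E (i - 1)) := by
      intro j hj hjs hmax
      obtain ⟨i', hi', hji'⟩ := (hsymm j).mp hjs
      have hi'lt : i' < i := by
        rcases lt_trichotomy i' i with h | h | h
        · exact h
        · exfalso; subst h; exact absurd hj (not_lt.mpr (hmle i' hi' j hji'))
        · exact absurd (hord i hi i' hi' h (m i) hmi j hji') (by omega)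
      rcases Nat.lt_or_ge i' (i - 1) with h | h
      · exfalso
        obtain ⟨w, hw⟩ := hne (i - 1) (by omega)
        have hjw : j < w := hord i' hi' (i - 1) (by omega) h j hji' w hw
        have hwm : w < m i := hord (i - 1) (by omega) i hi (by omega) w hw (m i) hmi
        exact hmax w hjw hwm ((hsymm w).mpr ⟨i - 1, by omega, hw⟩)
      · have : i' = i - 1 := by omega
        exact ⟨by omega, this ▸ hji'⟩
    by_cases hev : Even i
    · refine ⟨false, ⟨(hA _).mpr ⟨i, hi, hev, hmi⟩, fun h => hdisjAB _ ((hA _).mpr ⟨i, hi, hev, hmi⟩) h⟩, ?_⟩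
      intro j hj hjs hmax
      obtain ⟨h1i, hji⟩ := key j hj hjs hmax
      have hodd : ¬ Even (i - 1) := by
        rw [Nat.even_iff] at hev ⊢; omega
      have hjb : j ∈ intS e b' := (hB _).mpr ⟨i - 1, by omega, hodd, hji⟩
      exact ⟨hjb, fun h => hdisjAB _ h hjb⟩
    · refine ⟨true, ⟨(hB _).mpr ⟨i, hi, hev, hmi⟩, fun h => hdisjAB _ h ((hB _).mpr ⟨i, hi, hev, hmi⟩)⟩, ?_⟩
      intro j hj hjs hmax
      obtain ⟨h1i, hji⟩ := key j hj hjs hmax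
      have hevp : Even (i - 1) := by
        rw [Nat.even_iff] at hev ⊢; omega
      have hja : j ∈ intS e a' := (hA _).mpr ⟨i - 1, by omega, hevp, hji⟩
      exact ⟨hja, fun h => hdisjAB _ hja h⟩
  -- claim 2 : every oscillation point is some m i
  have hclaim2 : ∀ x, OscAt e a' b' x → ∃ i, i < t ∧ x = m i := by
    intro x hosc
    obtain ⟨k, ⟨hx1, hx2⟩, hclause⟩ := hosc
    have hxsymm : x ∈ symmDiff (intS e a') (intS e b') := by
      cases k
      · exact Or.inl ⟨hx1, hx2⟩
      · exact Or.inr ⟨hx1, hx2⟩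
    obtain ⟨i, hi, hxi⟩ := (hsymm x).mp hxsymm
    refine ⟨i, hi, ?_⟩
    by_contra hne'
    have hmix : m i < x := lt_of_le_of_ne (hmle i hi x hxi) (fun h => hne' h.symm)
    -- find the largest symmDiff element below x
    set V : Finset ℕ := (Finset.range x).filter
      (fun y => y ∈ symmDiff (intS e a') (intS e b')) with hV
    have hmiV : m i ∈ V := by
      rw [hV, Finset.mem_filter, Finset.mem_range]
      exact ⟨hmix, (hsymm (m i)).mpr ⟨i, hi, hmmem i hi⟩⟩
    set j := V.max' ⟨_, hmiV⟩ with hj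
    have hjV : j ∈ V := V.max'_mem _
    have hjx : j < x := Finset.mem_range.mp (Finset.mem_filter.mp hjV).1
    have hjs : j ∈ symmDiff (intS e a') (intS e b') := by
      have := (Finset.mem_filter.mp hjV).2
      simpa using this
    have hmax : ∀ j', j < j' → j' < x → j' ∉ symmDiff (intS e a') (intS e b') := by
      intro j' h1 h2 hjs'
      have : j' ∈ V := by
        rw [hV, Finset.mem_filter, Finset.mem_range]; exact ⟨h2, hjs'⟩
      exact absurd (V.le_max' j' this) (by omega)
    have hmij : m i ≤ j := V.le_max' _ hmiV
    obtain ⟨i', hi', hji'⟩ := (hsymm j).mp hjs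
    have hii' : i' = i := by
      rcases lt_trichotomy i' i with h | h | h
      · exact absurd (hord i' hi' i hi h j hji' (m i) (hmmem i hi)) (by omega)
      · exact h
      · exact absurd (hord i hi i' hi' h x hxi j hji') (by omega)
    subst hii'
    have hcl := hclause j hjx hjs hmax
    -- contradiction : j and x lie in the same block, hence same side
    cases k
    · -- k = false : x ∈ intS a' side, clause gives j ∈ intS b' and j ∉ intS a'
      simp only [Bool.cond_false] at hx1 hx2 hcl
      obtain ⟨ia, hia, hiaev, hxia⟩ := (hA x).mp hx1
      have : ia = i' := huniq ia hia i' hi' x hxia hxi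
      subst this
      exact hcl.2 ((hA j).mpr ⟨ia, hia, hiaev, hji'⟩)
    · simp only [Bool.cond_true] at hx1 hx2 hcl
      obtain ⟨ib, hib, hibodd, hxib⟩ := (hB x).mp hx1
      have : ib = i' := huniq ib hib i' hi' x hxib hxi
      subst this
      exact hcl.2 ((hB j).mpr ⟨ib, hib, hibodd, hji'⟩)
  -- conclude
  have hseteq : {i | OscAt e a' b' i} = ↑((Finset.range t).image m) := by
    ext x
    simp only [Set.mem_setOf_eq, Finset.coe_image, Set.mem_image, Finset.mem_coe,
      Finset.mem_range]
    constructor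
    · intro h
      obtain ⟨i, hi, hx⟩ := hclaim2 x h
      exact ⟨i, hi, hx.symm⟩
    · rintro ⟨i, hi, rfl⟩
      exact hclaim1 i hi
  rw [hseteq, Set.ncard_coe_finset]
  rw [Finset.card_image_of_injOn, Finset.card_range]
  intro i hi j hj hij
  simp only [Finset.coe_range, Set.mem_Iio] at hi hj
  by_contra hne'
  rcases lt_or_gt_of_ne hne' with h | h
  · exact absurd (hij ▸ hord i hi j hj h (m i) (hmmem i hi) (m j) (hmmem j hj)) (by omega)
  · exact absurd (hij ▸ hord j hj i hi h (m j) (hmmem j hj) (m i) (hmmem i hi)) (by omega)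
/-- oscillation increment lemma. -/
theorem osc_increment (e : ℚ → ℕ) (he : FinToOne e)
    (C : Set (Set ℚ)) (hC : IsSubalg C) (hCat : IsAtomlessAlg C)
    (hCc : C.Countable) (a b : Set ℚ) (ha : a ∈ C) (hb : b ∈ C)
    (hane : a ≠ ∅) (hbne : b ≠ ∅) :
    ∃ a' ∈ C, ∃ b' ∈ C, a' ⊆ a ∧ b' ⊆ b ∧
      osc e a' b' = osc e a b + 1 := by
  classical
  set t := osc e a b + 1 with ht
  obtain ⟨d, h1, h2, h3, h4, h5, h6⟩ := seq_pieces he hC hCat t 0 a ha b hb hane hbne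
  -- EP disjointness between distinct pieces
  have hepdisj : ∀ i < t, ∀ j < t, i ≠ j → EP (d i) ∩ EP (d j) = ∅ := by
    intro i hi j hj hij
    ext p
    simp only [Set.mem_inter_iff, Set.mem_empty_iff_false, iff_false, not_and]
    intro hpi hpj
    rcases lt_or_gt_of_ne hij with h | h
    · exact absurd (h6 i hi j hj h p hpi p hpj) (lt_irrefl _)
    · exact absurd (h6 j hj i hi h p hpj p hpi) (lt_irrefl _)
  set sA := (Finset.range t).filter (fun i => Even i) with hsA
  set sB := (Finset.range t).filter (fun i => ¬ Even i) with hsB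
  have hmemA : ∀ i ∈ sA, d i ∈ C := by
    intro i hi
    rw [hsA, Finset.mem_filter, Finset.mem_range] at hi
    exact (h1 i hi.1).1
  have hmemB : ∀ i ∈ sB, d i ∈ C := by
    intro i hi
    rw [hsB, Finset.mem_filter, Finset.mem_range] at hi
    exact (h1 i hi.1).1
  have hdisjA : ∀ i ∈ sA, ∀ j ∈ sA, i ≠ j → d i ∩ d j = ∅ ∧ EP (d i) ∩ EP (d j) = ∅ := by
    intro i hi j hj hij
    rw [hsA, Finset.mem_filter, Finset.mem_range] at hi hj
    exact ⟨h4 i hi.1 j hj.1 hij (by tauto), hepdisj i hi.1 j hj.1 hij⟩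
  have hdisjB : ∀ i ∈ sB, ∀ j ∈ sB, i ≠ j → d i ∩ d j = ∅ ∧ EP (d i) ∩ EP (d j) = ∅ := by
    intro i hi j hj hij
    rw [hsB, Finset.mem_filter, Finset.mem_range] at hi hj
    exact ⟨h4 i hi.1 j hj.1 hij (by tauto), hepdisj i hi.1 j hj.1 hij⟩
  obtain ⟨haC, haE⟩ := assemble hC d sA hmemA hdisjA
  obtain ⟨hbC, hbE⟩ := assemble hC d sB hmemB hdisjB
  set a' := ⋃ i ∈ sA, d i with ha'
  set b' := ⋃ i ∈ sB, d i with hb'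
  have ha'a : a' ⊆ a := by
    rw [ha']
    apply Set.iUnion₂_subset
    intro i hi
    rw [hsA, Finset.mem_filter, Finset.mem_range] at hi
    exact h2 i hi.1 hi.2
  have hb'b : b' ⊆ b := by
    rw [hb']
    apply Set.iUnion₂_subset
    intro i hi
    rw [hsB, Finset.mem_filter, Finset.mem_range] at hi
    exact h3 i hi.1 hi.2
  set E : ℕ → Set ℕ := fun i => e '' EP (d i) with hE
  have hAchar : ∀ x, x ∈ intS e a' ↔ ∃ i, i < t ∧ Even i ∧ x ∈ E i := by
    intro x
    rw [intS_eq_image_EP e (hC.1 a' haC), haE]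
    constructor
    · rintro ⟨p, hp, rfl⟩
      simp only [Set.mem_iUnion] at hp
      obtain ⟨i, hi, hpi⟩ := hp
      rw [hsA, Finset.mem_filter, Finset.mem_range] at hi
      exact ⟨i, hi.1, hi.2, ⟨p, hpi, rfl⟩⟩
    · rintro ⟨i, hi, hev, p, hp, rfl⟩
      refine ⟨p, ?_, rfl⟩
      simp only [Set.mem_iUnion]
      exact ⟨i, by rw [hsA, Finset.mem_filter, Finset.mem_range]; exact ⟨hi, hev⟩, hp⟩
  have hBchar : ∀ x, x ∈ intS e b' ↔ ∃ i, i < t ∧ ¬ Even i ∧ x ∈ E i := by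
    intro x
    rw [intS_eq_image_EP e (hC.1 b' hbC), hbE]
    constructor
    · rintro ⟨p, hp, rfl⟩
      simp only [Set.mem_iUnion] at hp
      obtain ⟨i, hi, hpi⟩ := hp
      rw [hsB, Finset.mem_filter, Finset.mem_range] at hi
      exact ⟨i, hi.1, hi.2, ⟨p, hpi, rfl⟩⟩
    · rintro ⟨i, hi, hev, p, hp, rfl⟩
      refine ⟨p, ?_, rfl⟩
      simp only [Set.mem_iUnion]
      exact ⟨i, by rw [hsB, Finset.mem_filter, Finset.mem_range]; exact ⟨hi, hev⟩, hp⟩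
  have hEne : ∀ i < t, (E i).Nonempty :=
    fun i hi => ((EP_nonempty (hC.1 _ (h1 i hi).1) (h1 i hi).2)).image e
  have hEord : ∀ i < t, ∀ j < t, i < j → ∀ x ∈ E i, ∀ y ∈ E j, x < y := by
    rintro i hi j hj hij x ⟨p, hp, rfl⟩ y ⟨q, hq, rfl⟩
    exact h6 i hi j hj hij p hp q hq
  refine ⟨a', haC, b', hbC, ha'a, hb'b, ?_⟩
  rw [osc]
  exact osc_count e a' b' t E hEne hEord hAchar hBchar
end

section
/- (Main theorem) There exists a coloring χ : Emb(B₃, B) → ℕ of the embeddings of the 3-atom Boolean algebra B₃ into the countable atomless Boolean algebra B with infinitely many colors, such that for every countable atomless subalgebra C of B and every n ∈ ℕ, there is an embedding of B₃ into C receiving color n. Consequently, the big Ramsey degree of B₃ in B is infinite. -/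
open Set

/-- An embedding of the 3-atom Boolean algebra (realized as `𝒫(Fin 3)`) into
the interval algebra of good subsets of `X`. -/
def IsEmb3 (f : Set (Fin 3) → Set ℚ) : Prop :=
  Function.Injective f ∧ (∀ s, IsGood (f s)) ∧
  f ∅ = ∅ ∧ f Set.univ = Xset ∧
  (∀ s t, f (s ∪ t) = f s ∪ f t) ∧
  (∀ s t, f (s ∩ t) = f s ∩ f t) ∧
  (∀ s, f sᶜ = Xset \ f s)

namespace BRD


noncomputable section
open Classical

/-- the fixed injection from `ℚ` to `ℕ`. -/
def e : ℚ → ℕ := fun q => Encodable.encode q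

lemma e_inj : Function.Injective e := Encodable.encode_injective

lemma e_window_finite (M : ℕ) : {q : ℚ | e q ≤ M}.Finite := by
  have : Finite ↥{q : ℚ | e q ≤ M} := by
    apply Finite.of_injective (fun x => (⟨e x.1, Nat.lt_succ_of_le x.2⟩ : Fin (M+1)))
    intro x y h
    exact Subtype.ext (e_inj (by simpa using congrArg Fin.val h))
  exact Set.toFinite _

/-- `a` contains an interval `(r, w)` just below `w`. -/
def LF (a : Set ℚ) (w : ℚ) : Prop := ∃ r, r < w ∧ ∀ x, r < x → x < w → x ∈ a
/-- `a` contains an interval `(w, r)` just above `w`. -/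
def RF (a : Set ℚ) (w : ℚ) : Prop := ∃ r, w < r ∧ ∀ x, w < x → x < r → x ∈ a
/-- boundary points of `a`. -/
def Bd (a : Set ℚ) : Set ℚ := {w | (LF a w ∧ ¬ RF a w) ∨ (RF a w ∧ ¬ LF a w)}

def Dst (X Y : Set ℚ) : Set ℚ := symmDiff (Bd X) (Bd Y)

def AltSet (X Y : Set ℚ) : Set ℚ :=
  {w | w ∈ Dst X Y ∧ ∃ w' ∈ Dst X Y, e w' < e w ∧ ¬((w' ∈ Bd X) ↔ (w ∈ Bd X)) ∧
        ∀ w'' ∈ Dst X Y, ¬(e w' < e w'' ∧ e w'' < e w)}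

def chi (f : Set (Fin 3) → Set ℚ) : ℕ := (AltSet (f {1}) (f {2})).ncard - 1

lemma exists_btw {p q : ℚ} (h : p < q) : ∃ x, p < x ∧ x < q :=
  ⟨(p+q)/2, by linarith, by linarith⟩

lemma LF.mono {a b : Set ℚ} {w : ℚ} (hab : a ⊆ b) : LF a w → LF b w := by
  rintro ⟨r, hr, h⟩; exact ⟨r, hr, fun x h1 h2 => hab (h x h1 h2)⟩

lemma RF.mono {a b : Set ℚ} {w : ℚ} (hab : a ⊆ b) : RF a w → RF b w := by
  rintro ⟨r, hr, h⟩; exact ⟨r, hr, fun x h1 h2 => hab (h x h1 h2)⟩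

lemma not_LF_empty (w : ℚ) : ¬ LF (∅ : Set ℚ) w := by
  rintro ⟨r, hr, h⟩
  obtain ⟨x, h1, h2⟩ := exists_btw hr
  exact (h x h1 h2)

lemma not_RF_empty (w : ℚ) : ¬ RF (∅ : Set ℚ) w := by
  rintro ⟨r, hr, h⟩
  obtain ⟨x, h1, h2⟩ := exists_btw hr
  exact (h x h1 h2)

lemma LF_disj {a b : Set ℚ} {w : ℚ} (hd : ∀ x, x ∈ a → x ∈ b → False) :
    LF a w → LF b w → False := by
  rintro ⟨r, hr, h⟩ ⟨r', hr', h'⟩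
  obtain ⟨x, h1, h2⟩ := exists_btw (max_lt hr hr')
  exact hd x (h x (lt_of_le_of_lt (le_max_left _ _) h1) h2)
    (h' x (lt_of_le_of_lt (le_max_right _ _) h1) h2)

lemma RF_disj {a b : Set ℚ} {w : ℚ} (hd : ∀ x, x ∈ a → x ∈ b → False) :
    RF a w → RF b w → False := by
  rintro ⟨r, hr, h⟩ ⟨r', hr', h'⟩
  obtain ⟨x, h1, h2⟩ := exists_btw (show w < min r r' from lt_min hr hr')
  exact hd x (h x h1 (lt_of_lt_of_le h2 (min_le_left _ _)))
    (h' x h1 (lt_of_lt_of_le h2 (min_le_right _ _)))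

lemma isGood_empty : IsGood (∅ : Set ℚ) := by
  refine ⟨by simp, 0, fun _ => 0, ?_, ?_, ?_⟩ <;> simp

lemma isGood_X : IsGood Xset := by
  refine ⟨le_refl _, 1, fun i => if i = 0 then 0 else 1, ?_, ?_, ?_⟩
  · intro i hi
    interval_cases i <;> simp [Eset, Xset]
  · intro i j hij hj
    interval_cases j
    · omega
    · interval_cases i <;> simp
  · intro x hx
    simp only [Xset, mem_setOf_eq] at hx
    constructor
    · intro _; exact ⟨0, by norm_num, by simpa using hx⟩
    · intro _; exact hx





lemma Eset_nonneg {q : ℚ} (h : q ∈ Eset) : 0 ≤ q := by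
  rcases h with h | h
  · exact h.1
  · simp only [mem_singleton_iff] at h; norm_num [h]

lemma Eset_le_one {q : ℚ} (h : q ∈ Eset) : q ≤ 1 := by
  rcases h with h | h
  · exact le_of_lt h.2
  · simp only [mem_singleton_iff] at h; norm_num [h]

lemma mem_Xset {x : ℚ} (h0 : 0 ≤ x) (h1 : x < 1) : x ∈ Xset := ⟨h0, h1⟩

/-- right dichotomy for good sets -/
lemma dichR {a : Set ℚ} (h : IsGood a) (w : ℚ) :
    RF a w ∨ ∃ r, w < r ∧ ∀ x, w < x → x < r → x ∉ a := by
  obtain ⟨hsub, n, f, hE, hmono, hmem⟩ := h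
  set S := ((Finset.range (2*n)).image f).filter (w < ·) with hS
  by_cases hSn : S.Nonempty
  case neg =>
    -- no endpoint above w at all: in fact then (w, w+1) ∩ a = ∅
    right
    refine ⟨w+1, by linarith, fun x hx1 _ hxa => ?_⟩
    obtain ⟨i, hi, h1, h2⟩ := (hmem x (hsub hxa)).mp hxa
    apply hSn
    refine ⟨f (2*i+1), Finset.mem_filter.mpr ⟨Finset.mem_image.mpr ⟨2*i+1, Finset.mem_range.mpr (by omega), rfl⟩, by linarith⟩⟩
  case pos =>
    set r := S.min' hSn with hr
    have hwr : w < r := (Finset.mem_filter.mp (S.min'_mem hSn)).2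
    have hrle : ∀ i, i < 2*n → w < f i → r ≤ f i := by
      intro i hi hwi
      exact S.min'_le _ (Finset.mem_filter.mpr ⟨Finset.mem_image.mpr ⟨i, Finset.mem_range.mpr hi, rfl⟩, hwi⟩)
    have claim : ∀ x y, w < x → x < r → w < y → y < r → x ∈ a → y ∈ a := by
      intro x y hx1 hx2 hy1 hy2 hxa
      obtain ⟨i, hi, h1, h2⟩ := (hmem x (hsub hxa)).mp hxa
      have hi1 : 2*i+1 < 2*n := by omega
      have hge : r ≤ f (2*i+1) := hrle _ hi1 (by linarith)
      have hle : f (2*i) ≤ w := by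
        by_contra hc
        push_neg at hc
        have := hrle (2*i) (by omega) hc
        linarith
      have hy0 : (0:ℚ) ≤ y := le_trans (Eset_nonneg (hE (2*i) (by omega))) (by linarith)
      have hy1' : y < 1 := lt_of_lt_of_le (by linarith) (Eset_le_one (hE (2*i+1) hi1))
      exact (hmem y (mem_Xset hy0 hy1')).mpr ⟨i, hi, by linarith, by linarith⟩
    by_cases hx : ∃ x, w < x ∧ x < r ∧ x ∈ a
    · obtain ⟨x, hx1, hx2, hxa⟩ := hx
      exact Or.inl ⟨r, hwr, fun y hy1 hy2 => claim x y hx1 hx2 hy1 hy2 hxa⟩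
    · push_neg at hx
      exact Or.inr ⟨r, hwr, hx⟩

/-- left dichotomy for good sets -/
lemma dichL {a : Set ℚ} (h : IsGood a) (w : ℚ) :
    LF a w ∨ ∃ r, r < w ∧ ∀ x, r < x → x < w → x ∉ a := by
  obtain ⟨hsub, n, f, hE, hmono, hmem⟩ := h
  set S := ((Finset.range (2*n)).image f).filter (· < w) with hS
  by_cases hSn : S.Nonempty
  case neg =>
    right
    refine ⟨w-1, by linarith, fun x _ hx2 hxa => ?_⟩
    obtain ⟨i, hi, h1, h2⟩ := (hmem x (hsub hxa)).mp hxa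
    apply hSn
    refine ⟨f (2*i), Finset.mem_filter.mpr ⟨Finset.mem_image.mpr ⟨2*i, Finset.mem_range.mpr (by omega), rfl⟩, by linarith⟩⟩
  case pos =>
    set r := S.max' hSn with hr
    have hwr : r < w := (Finset.mem_filter.mp (S.max'_mem hSn)).2
    have hrle : ∀ i, i < 2*n → f i < w → f i ≤ r := by
      intro i hi hwi
      exact S.le_max' _ (Finset.mem_filter.mpr ⟨Finset.mem_image.mpr ⟨i, Finset.mem_range.mpr hi, rfl⟩, hwi⟩)
    have claim : ∀ x y, r < x → x < w → r < y → y < w → x ∈ a → y ∈ a := by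
      intro x y hx1 hx2 hy1 hy2 hxa
      obtain ⟨i, hi, h1, h2⟩ := (hmem x (hsub hxa)).mp hxa
      have hi1 : 2*i+1 < 2*n := by omega
      have hge : w ≤ f (2*i+1) := by
        by_contra hc
        push_neg at hc
        have := hrle (2*i+1) hi1 hc
        linarith
      have hle : f (2*i) ≤ r := hrle (2*i) (by omega) (by linarith)
      have hy0 : (0:ℚ) ≤ y := le_trans (Eset_nonneg (hE (2*i) (by omega))) (by linarith)
      have hy1' : y < 1 := lt_of_lt_of_le hy2 (le_trans hge (Eset_le_one (hE (2*i+1) hi1)))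
      exact (hmem y (mem_Xset hy0 hy1')).mpr ⟨i, hi, by linarith, by linarith⟩
    by_cases hx : ∃ x, r < x ∧ x < w ∧ x ∈ a
    · obtain ⟨x, hx1, hx2, hxa⟩ := hx
      exact Or.inl ⟨r, hwr, fun y hy1 hy2 => claim x y hx1 hx2 hy1 hy2 hxa⟩
    · push_neg at hx
      exact Or.inr ⟨r, hwr, hx⟩

lemma bd_finite {a : Set ℚ} (h : IsGood a) : (Bd a).Finite := by
  obtain ⟨hsub, n, f, hE, hmono, hmem⟩ := h
  have hgood : IsGood a := ⟨hsub, n, f, hE, hmono, hmem⟩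
  apply Set.Finite.subset ((Finset.range (2*n)).image f).finite_toSet
  intro w hw
  simp only [Finset.coe_image, Finset.coe_range, mem_image, mem_Iio]
  rcases hw with ⟨⟨r₁, hr₁, hfull⟩, hnRF⟩ | ⟨⟨r₂, hr₂, hfull⟩, hnLF⟩
  · -- LF ∧ ¬RF : w is a right endpoint f (2i+1)
    obtain ⟨r₂, hr₂, hvac⟩ := (dichR hgood w).resolve_left hnRF
    set T := ((Finset.range (2*n)).image f).filter (· < w) with hT
    have hr1' : ∃ r', r' < w ∧ r₁ ≤ r' ∧ ∀ i, i < 2*n → f i < w → f i ≤ r' := by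
      by_cases hTn : T.Nonempty
      · refine ⟨max (T.max' hTn) r₁, max_lt (Finset.mem_filter.mp (T.max'_mem hTn)).2 hr₁, le_max_right _ _, ?_⟩
        intro i hi hiw
        exact le_trans (T.le_max' _ (Finset.mem_filter.mpr ⟨Finset.mem_image.mpr ⟨i, Finset.mem_range.mpr hi, rfl⟩, hiw⟩)) (le_max_left _ _)
      · refine ⟨r₁, hr₁, le_refl _, fun i hi hiw => absurd ?_ hTn⟩
        exact ⟨f i, Finset.mem_filter.mpr ⟨Finset.mem_image.mpr ⟨i, Finset.mem_range.mpr hi, rfl⟩, hiw⟩⟩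
    obtain ⟨r', hr'w, hr1r', hrbig⟩ := hr1'
    obtain ⟨x₀, hx1, hx2⟩ := exists_btw hr'w
    have hx₀a : x₀ ∈ a := hfull x₀ (by linarith) hx2
    obtain ⟨i, hi, h1, h2⟩ := (hmem x₀ (hsub hx₀a)).mp hx₀a
    have hge : w ≤ f (2*i+1) := by
      by_contra hc
      push_neg at hc
      have := hrbig (2*i+1) (by omega) hc
      linarith
    rcases eq_or_lt_of_le hge with heq | hlt
    · exact ⟨2*i+1, by omega, heq.symm⟩
    · exfalso
      obtain ⟨y, hy1, hy2⟩ := exists_btw (show w < min r₂ (f (2*i+1)) from lt_min hr₂ hlt)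
      have hy0 : (0:ℚ) ≤ y := le_trans (hsub hx₀a).1 (by linarith)
      have hy1' : y < 1 := lt_of_lt_of_le (lt_of_lt_of_le hy2 (min_le_right _ _)) (Eset_le_one (hE (2*i+1) (by omega)))
      exact hvac y hy1 (lt_of_lt_of_le hy2 (min_le_left _ _))
        ((hmem y (mem_Xset hy0 hy1')).mpr ⟨i, hi, by linarith [min_le_right r₂ (f (2*i+1))], lt_of_lt_of_le hy2 (min_le_right _ _)⟩)
  · -- RF ∧ ¬LF : w is a left endpoint f (2i)
    obtain ⟨r₁, hr₁, hvac⟩ := (dichL hgood w).resolve_left hnLF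
    set U := ((Finset.range (2*n)).image f).filter (w < ·) with hU
    have hr2' : ∃ r', w < r' ∧ r' ≤ r₂ ∧ ∀ i, i < 2*n → w < f i → r' ≤ f i := by
      by_cases hUn : U.Nonempty
      · refine ⟨min (U.min' hUn) r₂, lt_min (Finset.mem_filter.mp (U.min'_mem hUn)).2 hr₂, min_le_right _ _, ?_⟩
        intro i hi hiw
        exact le_trans (min_le_left _ _) (U.min'_le _ (Finset.mem_filter.mpr ⟨Finset.mem_image.mpr ⟨i, Finset.mem_range.mpr hi, rfl⟩, hiw⟩))
      · refine ⟨r₂, hr₂, le_refl _, fun i hi hiw => absurd ?_ hUn⟩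
        exact ⟨f i, Finset.mem_filter.mpr ⟨Finset.mem_image.mpr ⟨i, Finset.mem_range.mpr hi, rfl⟩, hiw⟩⟩
    obtain ⟨r', hwr', hr'r2, hrbig⟩ := hr2'
    obtain ⟨x₀, hx1, hx2⟩ := exists_btw hwr'
    have hx₀a : x₀ ∈ a := hfull x₀ hx1 (by linarith)
    obtain ⟨i, hi, h1, h2⟩ := (hmem x₀ (hsub hx₀a)).mp hx₀a
    have hle : f (2*i) ≤ w := by
      by_contra hc
      push_neg at hc
      have := hrbig (2*i) (by omega) hc
      linarith
    rcases eq_or_lt_of_le hle with heq | hlt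
    · exact ⟨2*i, by omega, heq⟩
    · exfalso
      obtain ⟨y, hy1, hy2⟩ := exists_btw (show max r₁ (f (2*i)) < w from max_lt hr₁ hlt)
      have hy0 : (0:ℚ) ≤ y := le_trans (Eset_nonneg (hE (2*i) (by omega))) (le_trans (le_max_right r₁ (f (2*i))) (le_of_lt hy1))
      have hyw : y < 1 := by
        have := (hsub hx₀a).2
        linarith
      have hyf : f (2*i) < y := lt_of_le_of_lt (le_max_right r₁ (f (2*i))) hy1
      exact hvac y (lt_of_le_of_lt (le_max_left r₁ (f (2*i))) hy1) hy2
        ((hmem y (mem_Xset hy0 hyw)).mpr ⟨i, hi, le_of_lt hyf, by linarith⟩)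


lemma bd_nonempty {a : Set ℚ} (h : IsGood a) (hne : a.Nonempty) : (Bd a).Nonempty := by
  obtain ⟨x, hx⟩ := hne
  obtain ⟨hsub, n, f, hE, hmono, hmem⟩ := h
  obtain ⟨i, hi, _, _⟩ := (hmem x (hsub hx)).mp hx
  have hn : 1 ≤ n := by omega
  have h01 : f 0 < f 1 := hmono 0 1 (by omega) (by omega)
  refine ⟨f 0, Or.inr ⟨⟨f 1, h01, fun y hy1 hy2 => ?_⟩, ?_⟩⟩
  · -- (f 0, f 1) ⊆ a
    have hy0 : (0:ℚ) ≤ y := le_trans (Eset_nonneg (hE 0 (by omega))) (le_of_lt hy1)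
    have hy1' : y < 1 := lt_of_lt_of_le hy2 (Eset_le_one (hE 1 (by omega)))
    refine (hmem y (mem_Xset hy0 hy1')).mpr ⟨0, by omega, ?_, ?_⟩
    · simpa using le_of_lt hy1
    · simpa using hy2
  · -- ¬ LF
    rintro ⟨r, hr, hfull⟩
    obtain ⟨y, hy1, hy2⟩ := exists_btw (max_lt hr (show f 0 - 1 < f 0 by linarith))
    have hya : y ∈ a := hfull y (lt_of_le_of_lt (le_max_left _ _) hy1) hy2
    obtain ⟨j, hj, hj1, _⟩ := (hmem y (hsub hya)).mp hya
    have : f 0 ≤ f (2*j) := by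
      rcases Nat.eq_zero_or_pos (2*j) with h0 | h0
      · rw [h0]
      · exact le_of_lt (hmono 0 (2*j) h0 (by omega))
    linarith

section Subalg
variable {C : Set (Set ℚ)}

lemma mem_good (hC : IsSubalg C) {a : Set ℚ} (ha : a ∈ C) : IsGood a := hC.1 a ha

lemma sdiff_mem (hC : IsSubalg C) {a b : Set ℚ} (ha : a ∈ C) (hb : b ∈ C) : a \ b ∈ C := by
  have hsub : a ⊆ Xset := (hC.1 a ha).1
  have : a \ b = a ∩ (Xset \ b) := by
    ext x
    constructor
    · rintro ⟨h1, h2⟩; exact ⟨h1, hsub h1, h2⟩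
    · rintro ⟨h1, _, h3⟩; exact ⟨h1, h3⟩
  rw [this]
  exact hC.2.2.2.2.1 a ha _ (hC.2.2.2.2.2 b hb)

lemma pigeon3 {p₁ p₂ p₃ : Set ℚ} (w : ℚ)
    (h12 : ∀ x, x ∈ p₁ → x ∈ p₂ → False)
    (h13 : ∀ x, x ∈ p₁ → x ∈ p₃ → False)
    (h23 : ∀ x, x ∈ p₂ → x ∈ p₃ → False) :
    (¬LF p₁ w ∧ ¬RF p₁ w) ∨ (¬LF p₂ w ∧ ¬RF p₂ w) ∨ (¬LF p₃ w ∧ ¬RF p₃ w) := by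
  have L12 : LF p₁ w → LF p₂ w → False := LF_disj h12
  have L13 : LF p₁ w → LF p₃ w → False := LF_disj h13
  have L23 : LF p₂ w → LF p₃ w → False := LF_disj h23
  have R12 : RF p₁ w → RF p₂ w → False := RF_disj h12
  have R13 : RF p₁ w → RF p₃ w → False := RF_disj h13
  have R23 : RF p₂ w → RF p₃ w → False := RF_disj h23
  tauto

lemma atomless_split (hC : IsSubalg C) (hA : IsAtomlessAlg C) {u : Set ℚ} (hu : u ∈ C)
    (hne : u.Nonempty) : ∃ b, b ∈ C ∧ b.Nonempty ∧ b ⊂ u := by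
  obtain ⟨b, hbC, hbne, hbu⟩ := hA u hu (Set.nonempty_iff_ne_empty.mp hne)
  exact ⟨b, hbC, Set.nonempty_iff_ne_empty.mpr hbne, hbu⟩

lemma three_split (hC : IsSubalg C) (hA : IsAtomlessAlg C) {u : Set ℚ} (hu : u ∈ C)
    (hne : u.Nonempty) :
    ∃ p₁ p₂ p₃ : Set ℚ, (p₁ ∈ C ∧ p₁.Nonempty ∧ p₁ ⊆ u) ∧ (p₂ ∈ C ∧ p₂.Nonempty ∧ p₂ ⊆ u) ∧
      (p₃ ∈ C ∧ p₃.Nonempty ∧ p₃ ⊆ u) ∧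
      (∀ x, x ∈ p₁ → x ∈ p₂ → False) ∧ (∀ x, x ∈ p₁ → x ∈ p₃ → False) ∧
      (∀ x, x ∈ p₂ → x ∈ p₃ → False) := by
  obtain ⟨b, hbC, hbne, hbu⟩ := atomless_split hC hA hu hne
  obtain ⟨b', hb'C, hb'ne, hb'b⟩ := atomless_split hC hA hbC hbne
  refine ⟨b', b \ b', u \ b, ⟨hb'C, hb'ne, le_trans hb'b.1 hbu.1⟩,
    ⟨sdiff_mem hC hbC hb'C, Set.diff_nonempty.mpr (fun hsub => hb'b.2 hsub), le_trans Set.diff_subset hbu.1⟩,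
    ⟨sdiff_mem hC hu hbC, Set.diff_nonempty.mpr (fun hsub => hbu.2 hsub), Set.diff_subset⟩,
    ?_, ?_, ?_⟩
  · intro x h1 h2; exact h2.2 h1
  · intro x h1 h2; exact h2.2 (hb'b.1 h1)
  · intro x h1 h2; exact h2.2 h1.1

lemma flee (hC : IsSubalg C) (hA : IsAtomlessAlg C) {u : Set ℚ} (hu : u ∈ C)
    (hne : u.Nonempty) {F : Set ℚ} (hF : F.Finite) :
    ∃ v, v ∈ C ∧ v.Nonempty ∧ v ⊂ u ∧ ∀ w ∈ F, ¬LF v w ∧ ¬RF v w := by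
  refine Set.Finite.induction_on
    (motive := fun G _ => ∃ v, v ∈ C ∧ v.Nonempty ∧ v ⊂ u ∧ ∀ w ∈ G, ¬LF v w ∧ ¬RF v w) F hF ?_ ?_
  case refine_1 =>
      obtain ⟨b, hbC, hbne, hbu⟩ := atomless_split hC hA hu hne
      exact ⟨b, hbC, hbne, hbu, by simp⟩
  case refine_2 =>
      intro w F hwF hFfin IH
      obtain ⟨v, hvC, hvne, hvu, hvF⟩ := IH
      obtain ⟨p₁, p₂, p₃, ⟨h1C, h1ne, h1s⟩, ⟨h2C, h2ne, h2s⟩, ⟨h3C, h3ne, h3s⟩, d12, d13, d23⟩ :=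
        three_split hC hA hvC hvne
      have key := pigeon3 w d12 d13 d23
      rcases key with h | h | h
      · exact ⟨p₁, h1C, h1ne, ssubset_of_subset_of_ssubset h1s hvu, fun w' hw' => by
          rcases hw' with rfl | hw'
          · exact h
          · exact ⟨fun hl => (hvF w' hw').1 (hl.mono h1s), fun hr => (hvF w' hw').2 (hr.mono h1s)⟩⟩
      · exact ⟨p₂, h2C, h2ne, ssubset_of_subset_of_ssubset h2s hvu, fun w' hw' => by
          rcases hw' with rfl | hw'
          · exact h
          · exact ⟨fun hl => (hvF w' hw').1 (hl.mono h2s), fun hr => (hvF w' hw').2 (hr.mono h2s)⟩⟩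
      · exact ⟨p₃, h3C, h3ne, ssubset_of_subset_of_ssubset h3s hvu, fun w' hw' => by
          rcases hw' with rfl | hw'
          · exact h
          · exact ⟨fun hl => (hvF w' hw').1 (hl.mono h3s), fun hr => (hvF w' hw').2 (hr.mono h3s)⟩⟩

/-- state of the recursive construction -/
structure StD (C : Set (Set ℚ)) where
  v : Set ℚ
  M : ℕ
  hv : v ∈ C
  hne : v.Nonempty
  hbd : ∀ w ∈ Bd v, e w ≤ M

lemma step_ex (hC : IsSubalg C) (hA : IsAtomlessAlg C) (s : StD C) :
    ∃ t : StD C, t.v ⊂ s.v ∧ s.M ≤ t.M ∧ ∀ w : ℚ, e w ≤ s.M → ¬LF t.v w ∧ ¬RF t.v w := by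
  obtain ⟨v, hvC, hvne, hvu, hvF⟩ := flee hC hA s.hv s.hne (e_window_finite s.M)
  refine ⟨⟨v, max s.M (((bd_finite (mem_good hC hvC)).toFinset).sup e), hvC, hvne, ?_⟩,
    hvu, le_max_left _ _, fun w hw => hvF w hw⟩
  intro w hw
  exact le_trans (Finset.le_sup (f := e) ((bd_finite (mem_good hC hvC)).mem_toFinset.mpr hw))
    (le_max_right _ _)

variable (hC : IsSubalg C) (hA : IsAtomlessAlg C)

def chainSt (hC : IsSubalg C) (hA : IsAtomlessAlg C) : ℕ → StD C
  | 0 => ⟨Xset, ((bd_finite isGood_X).toFinset).sup e, hC.2.2.1, ⟨0, by norm_num [Xset]⟩,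
      fun w hw => Finset.le_sup (f := e) ((bd_finite isGood_X).mem_toFinset.mpr hw)⟩
  | (j+1) => Classical.choose (step_ex hC hA (chainSt hC hA j))

def P (j : ℕ) : Set ℚ := (chainSt hC hA j).v
def Mb (j : ℕ) : ℕ := (chainSt hC hA j).M

lemma chain_spec (j : ℕ) : P hC hA (j+1) ⊂ P hC hA j ∧ Mb hC hA j ≤ Mb hC hA (j+1) ∧
    ∀ w : ℚ, e w ≤ Mb hC hA j → ¬LF (P hC hA (j+1)) w ∧ ¬RF (P hC hA (j+1)) w :=
  Classical.choose_spec (step_ex hC hA (chainSt hC hA j))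

lemma P_memC (j : ℕ) : P hC hA j ∈ C := (chainSt hC hA j).hv
lemma P_good (j : ℕ) : IsGood (P hC hA j) := mem_good hC (P_memC hC hA j)
lemma P_ne (j : ℕ) : (P hC hA j).Nonempty := (chainSt hC hA j).hne
lemma P_zero : P hC hA 0 = Xset := rfl

lemma P_antitone : ∀ {i j : ℕ}, i ≤ j → P hC hA j ⊆ P hC hA i := by
  intro i j hij
  induction j with
  | zero => simp_all
  | succ k IH =>
      rcases Nat.lt_or_ge i (k+1) with h | h
      · exact le_trans (chain_spec hC hA k).1.1 (IH (by omega))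
      · have : i = k+1 := by omega
        subst this; rfl

lemma Mb_mono : ∀ {i j : ℕ}, i ≤ j → Mb hC hA i ≤ Mb hC hA j := by
  intro i j hij
  induction j with
  | zero => simp_all
  | succ k IH =>
      rcases Nat.lt_or_ge i (k+1) with h | h
      · exact le_trans (IH (by omega)) (chain_spec hC hA k).2.1
      · have : i = k+1 := by omega
        subst this; rfl

lemma bd_low {i j : ℕ} (hij : i ≤ j) {w : ℚ} (hw : w ∈ Bd (P hC hA i)) :
    e w ≤ Mb hC hA j := le_trans ((chainSt hC hA i).hbd w hw) (Mb_mono hC hA hij)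

lemma bd_high {j : ℕ} {w : ℚ} (hw : w ∈ Bd (P hC hA (j+1))) : Mb hC hA j < e w := by
  by_contra hc
  push_neg at hc
  have := (chain_spec hC hA j).2.2 w hc
  rcases hw with ⟨h1, _⟩ | ⟨h1, _⟩
  · exact this.1 h1
  · exact this.2 h1

lemma bd_sep {i j : ℕ} (hij : i < j) {w w' : ℚ} (hw : w ∈ Bd (P hC hA i))
    (hw' : w' ∈ Bd (P hC hA j)) : e w < e w' := by
  obtain ⟨k, rfl⟩ : ∃ k, j = k + 1 := ⟨j - 1, by omega⟩
  exact lt_of_le_of_lt (bd_low hC hA (by omega) hw) (bd_high hC hA hw')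

end Subalg

/-! ### the colour pattern -/

def sg (j : ℕ) : Fin 3 := if j % 2 = 0 then 0 else if (j / 2) % 2 = 0 then 1 else 2
def labN (j : ℕ) : Fin 3 := if ((j-1)/2) % 2 = 0 then 1 else 2

lemma labN_ne (j : ℕ) : labN j ≠ 0 := by
  unfold labN; split <;> decide

lemma labN_cases (j : ℕ) : labN j = 1 ∨ labN j = 2 := by
  unfold labN; split
  · exact Or.inl rfl
  · exact Or.inr rfl

lemma sg_spec (j : ℕ) (h : 1 ≤ j) :
    (sg (j-1) = 0 ∧ sg j = labN j) ∨ (sg j = 0 ∧ sg (j-1) = labN j) := by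
  obtain ⟨k, hk⟩ : ∃ k, j = 2*k+1 ∨ j = 2*k+2 := ⟨(j-1)/2, by omega⟩
  rcases hk with rfl | rfl
  · left
    have h1 : (2*k+1) % 2 = 1 := by omega
    have h2 : (2*k+1) / 2 = k := by omega
    have h3 : (2*k+1) - 1 = 2*k := by omega
    have h4 : (2*k) % 2 = 0 := by omega
    have h5 : (2*k+1-1)/2 = k := by omega
    constructor
    · simp [sg, h3, h4]
    · simp only [sg, labN, h1, h2, h5]
      norm_num
  · right
    have h1 : (2*k+2) % 2 = 0 := by omega
    have h3 : (2*k+2) - 1 = 2*k+1 := by omega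
    have h4 : (2*k+1) % 2 = 1 := by omega
    have h5 : (2*k+2-1)/2 = k := by omega
    have h6 : (2*k+1)/2 = k := by omega
    constructor
    · simp [sg, h1]
    · simp only [sg, labN, h3, h4, h5, h6]
      norm_num

lemma labN_same (k : ℕ) : labN (2*k+2) = labN (2*k+1) := by
  have h5 : (2*k+2-1)/2 = k := by omega
  have h6 : (2*k+1-1)/2 = k := by omega
  have h7 : (2*k+1)/2 = k := by omega
  simp [labN, h5, h6, h7]

lemma labN_change (k : ℕ) (h : 1 ≤ k) : labN (2*k+1) ≠ labN (2*k) := by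
  have h5 : (2*k+1-1)/2 = k := by omega
  have h6 : (2*k-1)/2 = k-1 := by omega
  have : k % 2 = 0 ∨ k % 2 = 1 := by omega
  rcases this with hp | hp
  · have : (k-1) % 2 = 1 := by omega
    simp [labN, h5, h6, hp, this]
  · have : (k-1) % 2 = 0 := by omega
    simp [labN, h5, h6, hp, this]

/-! ### the partition -/

section Part
variable {C : Set (Set ℚ)} (hC : IsSubalg C) (hA : IsAtomlessAlg C)

def mm (n : ℕ) : ℕ := 2*n+4

def Q (n j : ℕ) : Set ℚ := if j ≤ mm n then P hC hA j else ∅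

lemma Q_memC (n j : ℕ) : Q hC hA n j ∈ C := by
  unfold Q; split
  · exact P_memC hC hA j
  · exact hC.2.1

lemma Q_good (n j : ℕ) : IsGood (Q hC hA n j) := mem_good hC (Q_memC hC hA n j)

lemma Q_zero (n : ℕ) : Q hC hA n 0 = Xset := by
  unfold Q; rw [if_pos (by omega)]; rfl

lemma Q_eq (n : ℕ) {j : ℕ} (h : j ≤ mm n) : Q hC hA n j = P hC hA j := if_pos h

lemma Q_antitone (n : ℕ) {i j : ℕ} (hij : i ≤ j) : Q hC hA n j ⊆ Q hC hA n i := by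
  unfold Q
  split
  case isTrue h => rw [if_pos (le_trans hij h)]; exact P_antitone hC hA hij
  case isFalse h => simp

lemma Q_sub_X (n j : ℕ) : Q hC hA n j ⊆ Xset := by
  rw [← Q_zero hC hA n]; exact Q_antitone hC hA n (by omega)

/-- the pieces -/
def Dp (n j : ℕ) : Set ℚ := Q hC hA n j \ Q hC hA n (j+1)

lemma Dp_memC (n j : ℕ) : Dp hC hA n j ∈ C :=
  sdiff_mem hC (Q_memC hC hA n j) (Q_memC hC hA n (j+1))

lemma Dp_disj (n : ℕ) {i j : ℕ} (hij : i ≠ j) {x : ℚ} (hx : x ∈ Dp hC hA n i)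
    (hy : x ∈ Dp hC hA n j) : False := by
  rcases Nat.lt_or_ge i j with h | h
  · exact hx.2 (Q_antitone hC hA n h hy.1)
  · have h' : j < i := by omega
    exact hy.2 (Q_antitone hC hA n h' hx.1)

lemma Dp_cover (n : ℕ) {x : ℚ} (hx : x ∈ Xset) : ∃ j, j ≤ mm n ∧ x ∈ Dp hC hA n j := by
  classical
  set jj := Nat.findGreatest (fun j => x ∈ Q hC hA n j) (mm n) with hjj
  have h0 : x ∈ Q hC hA n 0 := by rw [Q_zero]; exact hx
  have hspec : x ∈ Q hC hA n jj := by
    have := Nat.findGreatest_spec (P := fun j => x ∈ Q hC hA n j) (m := 0) (n := mm n)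
      (Nat.zero_le _) h0
    simpa [hjj] using this
  have hle : jj ≤ mm n := Nat.findGreatest_le _
  refine ⟨jj, hle, hspec, ?_⟩
  rcases Nat.lt_or_ge jj (mm n) with h | h
  · have := Nat.findGreatest_is_greatest (P := fun j => x ∈ Q hC hA n j) (n := mm n)
      (k := jj+1) (by omega) (by omega)
    exact this
  · have : jj + 1 > mm n := by omega
    unfold Q
    rw [if_neg (by omega)]
    simp

/-- the three atoms -/
def Aa (n : ℕ) (t : Fin 3) : Set ℚ := {x | ∃ j, j ≤ mm n ∧ sg j = t ∧ x ∈ Dp hC hA n j}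

lemma Dp_sub_A (n : ℕ) {j : ℕ} (hj : j ≤ mm n) : Dp hC hA n j ⊆ Aa hC hA n (sg j) :=
  fun x hx => ⟨j, hj, rfl, hx⟩

lemma A_disj (n : ℕ) {t t' : Fin 3} (h : t ≠ t') {x : ℚ} (hx : x ∈ Aa hC hA n t)
    (hy : x ∈ Aa hC hA n t') : False := by
  obtain ⟨j, hj, hsg, hxd⟩ := hx
  obtain ⟨j', hj', hsg', hyd⟩ := hy
  have : j ≠ j' := fun hh => h (hsg ▸ hsg' ▸ hh ▸ rfl)
  exact Dp_disj hC hA n this hxd hyd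

lemma A_sub_X (n : ℕ) (t : Fin 3) : Aa hC hA n t ⊆ Xset := by
  rintro x ⟨j, hj, _, hx⟩
  exact Q_sub_X hC hA n j hx.1

lemma A_cover (n : ℕ) {x : ℚ} (hx : x ∈ Xset) : ∃ t, x ∈ Aa hC hA n t := by
  obtain ⟨j, hj, hd⟩ := Dp_cover hC hA n hx
  exact ⟨sg j, j, hj, rfl, hd⟩

lemma A_memC (n : ℕ) (t : Fin 3) : Aa hC hA n t ∈ C := by
  have gen : ∀ S : Finset ℕ, {x | ∃ j ∈ S, sg j = t ∧ x ∈ Dp hC hA n j} ∈ C := by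
    intro S
    induction S using Finset.induction_on with
    | empty => simpa using hC.2.1
    | @insert a S ha IH =>
        by_cases hsa : sg a = t
        · have : {x | ∃ j ∈ insert a S, sg j = t ∧ x ∈ Dp hC hA n j}
              = Dp hC hA n a ∪ {x | ∃ j ∈ S, sg j = t ∧ x ∈ Dp hC hA n j} := by
            ext x
            simp only [Finset.mem_insert, mem_setOf_eq, mem_union]
            constructor
            · rintro ⟨j, (rfl | hj), h1, h2⟩
              · exact Or.inl h2
              · exact Or.inr ⟨j, hj, h1, h2⟩
            · rintro (h | ⟨j, hj, h1, h2⟩)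
              · exact ⟨a, Or.inl rfl, hsa, h⟩
              · exact ⟨j, Or.inr hj, h1, h2⟩
          rw [this]
          exact hC.2.2.2.1 _ (Dp_memC hC hA n a) _ IH
        · have : {x | ∃ j ∈ insert a S, sg j = t ∧ x ∈ Dp hC hA n j}
              = {x | ∃ j ∈ S, sg j = t ∧ x ∈ Dp hC hA n j} := by
            ext x
            simp only [Finset.mem_insert, mem_setOf_eq]
            constructor
            · rintro ⟨j, (rfl | hj), h1, h2⟩
              · exact absurd h1 hsa
              · exact ⟨j, hj, h1, h2⟩
            · rintro ⟨j, hj, h1, h2⟩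
              exact ⟨j, Or.inr hj, h1, h2⟩
          rw [this]
          exact IH
  have : Aa hC hA n t = {x | ∃ j ∈ Finset.range (mm n + 1), sg j = t ∧ x ∈ Dp hC hA n j} := by
    ext x
    simp only [Aa, mem_setOf_eq, Finset.mem_range]
    constructor
    · rintro ⟨j, h1, h2, h3⟩; exact ⟨j, by omega, h2, h3⟩
    · rintro ⟨j, h1, h2, h3⟩; exact ⟨j, by omega, h2, h3⟩
  rw [this]
  exact gen _

end Part

/-! ### local structure at boundary points -/

lemma LF_sdiff {S T : Set ℚ} {w : ℚ} (h : LF S w)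
    (hv : ∃ r, r < w ∧ ∀ x, r < x → x < w → x ∉ T) : LF (S \ T) w := by
  obtain ⟨r1, hr1, h1⟩ := h
  obtain ⟨r2, hr2, h2⟩ := hv
  refine ⟨max r1 r2, max_lt hr1 hr2, fun x hx1 hx2 => ?_⟩
  exact ⟨h1 x (lt_of_le_of_lt (le_max_left _ _) hx1) hx2,
    h2 x (lt_of_le_of_lt (le_max_right _ _) hx1) hx2⟩

lemma RF_sdiff {S T : Set ℚ} {w : ℚ} (h : RF S w)
    (hv : ∃ r, w < r ∧ ∀ x, w < x → x < r → x ∉ T) : RF (S \ T) w := by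
  obtain ⟨r1, hr1, h1⟩ := h
  obtain ⟨r2, hr2, h2⟩ := hv
  refine ⟨min r1 r2, lt_min hr1 hr2, fun x hx1 hx2 => ?_⟩
  exact ⟨h1 x hx1 (lt_of_lt_of_le hx2 (min_le_left _ _)),
    h2 x hx1 (lt_of_lt_of_le hx2 (min_le_right _ _))⟩

section Master
variable {C : Set (Set ℚ)} (hC : IsSubalg C) (hA : IsAtomlessAlg C)

lemma W1 {n j : ℕ} (h2 : j ≤ mm n) {w : ℚ} (hw : w ∈ Bd (Q hC hA n j)) :
    ¬LF (Q hC hA n (j+1)) w ∧ ¬RF (Q hC hA n (j+1)) w := by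
  by_cases h3 : j + 1 ≤ mm n
  · rw [Q_eq hC hA n h3]
    rw [Q_eq hC hA n h2] at hw
    exact (chain_spec hC hA j).2.2 w (bd_low hC hA (le_refl j) hw)
  · unfold Q
    rw [if_neg h3]
    exact ⟨not_LF_empty w, not_RF_empty w⟩

lemma W2 {n j : ℕ} (h1 : 1 ≤ j) (h2 : j ≤ mm n) {w : ℚ} (hw : w ∈ Bd (Q hC hA n j)) :
    w ∉ Bd (Q hC hA n (j-1)) := by
  rw [Q_eq hC hA n h2] at hw
  intro hcon
  rw [Q_eq hC hA n (by omega)] at hcon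
  have hj1 : j - 1 + 1 = j := by omega
  have hhigh : Mb hC hA (j-1) < e w := by
    apply bd_high hC hA
    rw [hj1]
    exact hw
  have hlow : e w ≤ Mb hC hA (j-1) := bd_low hC hA (le_refl _) hcon
  omega

lemma bd_sepQ {n i j : ℕ} (hij : i < j) (hi : i ≤ mm n) (hj : j ≤ mm n) {w w' : ℚ}
    (hw : w ∈ Bd (Q hC hA n i)) (hw' : w' ∈ Bd (Q hC hA n j)) : e w < e w' := by
  rw [Q_eq hC hA n hi] at hw
  rw [Q_eq hC hA n hj] at hw'
  exact bd_sep hC hA hij hw hw'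

lemma LF_A_unique {n : ℕ} {w : ℚ} {t t' : Fin 3} (h : LF (Aa hC hA n t) w)
    (h' : LF (Aa hC hA n t') w) : t = t' := by
  by_contra hc
  exact LF_disj (fun x hx hy => A_disj hC hA n hc hx hy) h h'

lemma RF_A_unique {n : ℕ} {w : ℚ} {t t' : Fin 3} (h : RF (Aa hC hA n t) w)
    (h' : RF (Aa hC hA n t') w) : t = t' := by
  by_contra hc
  exact RF_disj (fun x hx hy => A_disj hC hA n hc hx hy) h h'

lemma finish_block {n : ℕ} {w : ℚ} {tl : Fin 3} (hl : tl ≠ 0)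
    (h : (LF (Aa hC hA n tl) w ∧ RF (Aa hC hA n 0) w) ∨
         (LF (Aa hC hA n 0) w ∧ RF (Aa hC hA n tl) w)) :
    w ∈ Bd (Aa hC hA n tl) ∧ ∀ t : Fin 3, t ≠ 0 → t ≠ tl → w ∉ Bd (Aa hC hA n t) := by
  rcases h with ⟨hLF, hRF⟩ | ⟨hLF, hRF⟩
  · constructor
    · exact Or.inl ⟨hLF, fun hc => hl (RF_A_unique hC hA hc hRF)⟩
    · intro t ht0 htl
      rintro (⟨hL, _⟩ | ⟨hR, _⟩)
      · exact htl (LF_A_unique hC hA hL hLF)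
      · exact ht0 (RF_A_unique hC hA hR hRF)
  · constructor
    · exact Or.inr ⟨hRF, fun hc => hl (LF_A_unique hC hA hc hLF)⟩
    · intro t ht0 htl
      rintro (⟨hL, _⟩ | ⟨hR, _⟩)
      · exact ht0 (LF_A_unique hC hA hL hLF)
      · exact htl (RF_A_unique hC hA hR hRF)

lemma block_mem {n j : ℕ} (h1 : 1 ≤ j) (h2 : j ≤ mm n) {w : ℚ} (hw : w ∈ Bd (Q hC hA n j)) :
    w ∈ Bd (Aa hC hA n (labN j)) ∧
      ∀ t : Fin 3, t ≠ 0 → t ≠ labN j → w ∉ Bd (Aa hC hA n t) := by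
  have hj1 : j - 1 + 1 = j := by omega
  have hW1 := W1 hC hA h2 hw
  have hnot := W2 hC hA h1 h2 hw
  have main : (LF (Aa hC hA n (sg j)) w ∧ RF (Aa hC hA n (sg (j-1))) w) ∨
      (RF (Aa hC hA n (sg j)) w ∧ LF (Aa hC hA n (sg (j-1))) w) := by
    rcases hw with ⟨hLF, hnRF⟩ | ⟨hRF, hnLF⟩
    · left
      constructor
      · apply LF.mono (Dp_sub_A hC hA n h2)
        exact LF_sdiff hLF ((dichL (Q_good hC hA n (j+1)) w).resolve_left hW1.1)
      · have hLFj1 : LF (Q hC hA n (j-1)) w := hLF.mono (Q_antitone hC hA n (by omega))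
        have hRFj1 : RF (Q hC hA n (j-1)) w := by
          by_contra hc
          exact hnot (Or.inl ⟨hLFj1, hc⟩)
        apply RF.mono (Dp_sub_A hC hA n (show j - 1 ≤ mm n by omega))
        have hv := (dichR (Q_good hC hA n j) w).resolve_left hnRF
        have : RF (Q hC hA n (j-1) \ Q hC hA n j) w := RF_sdiff hRFj1 hv
        unfold Dp
        rw [hj1]
        exact this
    · right
      constructor
      · apply RF.mono (Dp_sub_A hC hA n h2)
        exact RF_sdiff hRF ((dichR (Q_good hC hA n (j+1)) w).resolve_left hW1.2)
      · have hRFj1 : RF (Q hC hA n (j-1)) w := hRF.mono (Q_antitone hC hA n (by omega))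
        have hLFj1 : LF (Q hC hA n (j-1)) w := by
          by_contra hc
          exact hnot (Or.inr ⟨hRFj1, hc⟩)
        apply LF.mono (Dp_sub_A hC hA n (show j - 1 ≤ mm n by omega))
        have hv := (dichL (Q_good hC hA n j) w).resolve_left hnLF
        have : LF (Q hC hA n (j-1) \ Q hC hA n j) w := LF_sdiff hLFj1 hv
        unfold Dp
        rw [hj1]
        exact this
  rcases sg_spec j h1 with ⟨hz, he⟩ | ⟨hz, he⟩
  · -- sg (j-1) = 0, sg j = labN j
    rw [← he]
    apply finish_block hC hA (by rw [he]; exact labN_ne j)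
    rcases main with ⟨hL, hR⟩ | ⟨hR, hL⟩
    · exact Or.inl ⟨hL, hz ▸ hR⟩
    · exact Or.inr ⟨hz ▸ hL, hR⟩
  · -- sg j = 0, sg (j-1) = labN j
    rw [← he]
    apply finish_block hC hA (by rw [he]; exact labN_ne j)
    rcases main with ⟨hL, hR⟩ | ⟨hR, hL⟩
    · exact Or.inr ⟨hz ▸ hL, hR⟩
    · exact Or.inl ⟨hL, hz ▸ hR⟩

lemma maxLF {n : ℕ} {w : ℚ} (h0 : LF (Q hC hA n 0) w) :
    ∃ jL, jL ≤ mm n ∧ LF (Q hC hA n jL) w ∧ ¬LF (Q hC hA n (jL+1)) w ∧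
      LF (Aa hC hA n (sg jL)) w := by
  classical
  set jL := Nat.findGreatest (fun j => LF (Q hC hA n j) w) (mm n + 1) with hjLdef
  have hspec : LF (Q hC hA n jL) w := by
    have := Nat.findGreatest_spec (P := fun j => LF (Q hC hA n j) w) (m := 0) (n := mm n + 1)
      (Nat.zero_le _) h0
    simpa [hjLdef] using this
  have hle' : jL ≤ mm n + 1 := Nat.findGreatest_le _
  have hle : jL ≤ mm n := by
    rcases Nat.lt_or_ge jL (mm n + 1) with h | h
    · omega
    · exfalso
      have : jL = mm n + 1 := by omega
      rw [this] at hspec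
      unfold Q at hspec
      rw [if_neg (by omega)] at hspec
      exact not_LF_empty w hspec
  have hnext : ¬LF (Q hC hA n (jL+1)) w := by
    have := Nat.findGreatest_is_greatest (P := fun j => LF (Q hC hA n j) w) (n := mm n + 1)
      (k := jL + 1) (by omega) (by omega)
    exact this
  refine ⟨jL, hle, hspec, hnext, ?_⟩
  apply LF.mono (Dp_sub_A hC hA n hle)
  exact LF_sdiff hspec ((dichL (Q_good hC hA n (jL+1)) w).resolve_left hnext)

lemma maxRF {n : ℕ} {w : ℚ} (h0 : RF (Q hC hA n 0) w) :
    ∃ jR, jR ≤ mm n ∧ RF (Q hC hA n jR) w ∧ ¬RF (Q hC hA n (jR+1)) w ∧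
      RF (Aa hC hA n (sg jR)) w := by
  classical
  set jR := Nat.findGreatest (fun j => RF (Q hC hA n j) w) (mm n + 1) with hjRdef
  have hspec : RF (Q hC hA n jR) w := by
    have := Nat.findGreatest_spec (P := fun j => RF (Q hC hA n j) w) (m := 0) (n := mm n + 1)
      (Nat.zero_le _) h0
    simpa [hjRdef] using this
  have hle' : jR ≤ mm n + 1 := Nat.findGreatest_le _
  have hle : jR ≤ mm n := by
    rcases Nat.lt_or_ge jR (mm n + 1) with h | h
    · omega
    · exfalso
      have : jR = mm n + 1 := by omega
      rw [this] at hspec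
      unfold Q at hspec
      rw [if_neg (by omega)] at hspec
      exact not_RF_empty w hspec
  have hnext : ¬RF (Q hC hA n (jR+1)) w := by
    have := Nat.findGreatest_is_greatest (P := fun j => RF (Q hC hA n j) w) (n := mm n + 1)
      (k := jR + 1) (by omega) (by omega)
    exact this
  refine ⟨jR, hle, hspec, hnext, ?_⟩
  apply RF.mono (Dp_sub_A hC hA n hle)
  exact RF_sdiff hspec ((dichR (Q_good hC hA n (jR+1)) w).resolve_left hnext)

lemma sg_zero : sg 0 = 0 := by norm_num [sg]

lemma noblock {n : ℕ} {w : ℚ}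
    (hw : ∀ j, 1 ≤ j → j ≤ mm n → w ∉ Bd (Q hC hA n j))
    {t : Fin 3} (ht : t ≠ 0) : w ∉ Bd (Aa hC hA n t) := by
  rintro (⟨hLF, hnRF⟩ | ⟨hRF, hnLF⟩)
  · have h0 : LF (Q hC hA n 0) w := by
      apply hLF.mono
      rw [Q_zero hC hA n]
      exact A_sub_X hC hA n t
    obtain ⟨jL, hjLm, hL, hnL, hLA⟩ := maxLF hC hA h0
    have ht' : t = sg jL := LF_A_unique hC hA hLF hLA
    by_cases hR0 : RF (Q hC hA n 0) w
    · obtain ⟨jR, hjRm, hR, hnR, hRA⟩ := maxRF hC hA hR0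
      rcases Nat.lt_trichotomy jL jR with hlt | heq | hgt
      · apply hw jR (by omega) hjRm
        exact Or.inr ⟨hR, fun hc => hnL (hc.mono (Q_antitone hC hA n (by omega)))⟩
      · apply hnRF
        rw [ht', heq]
        exact hRA
      · apply hw jL (by omega) hjLm
        exact Or.inl ⟨hL, fun hc => hnR (hc.mono (Q_antitone hC hA n (by omega)))⟩
    · rcases Nat.eq_zero_or_pos jL with h0' | h0'
      · apply ht
        rw [ht', h0', sg_zero]
      · apply hw jL (by omega) hjLm
        exact Or.inl ⟨hL, fun hc => hR0 (hc.mono (Q_antitone hC hA n (Nat.zero_le _)))⟩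
  · have h0 : RF (Q hC hA n 0) w := by
      apply hRF.mono
      rw [Q_zero hC hA n]
      exact A_sub_X hC hA n t
    obtain ⟨jR, hjRm, hR, hnR, hRA⟩ := maxRF hC hA h0
    have ht' : t = sg jR := RF_A_unique hC hA hRF hRA
    by_cases hL0 : LF (Q hC hA n 0) w
    · obtain ⟨jL, hjLm, hL, hnL, hLA⟩ := maxLF hC hA hL0
      rcases Nat.lt_trichotomy jL jR with hlt | heq | hgt
      · apply hw jR (by omega) hjRm
        exact Or.inr ⟨hR, fun hc => hnL (hc.mono (Q_antitone hC hA n (by omega)))⟩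
      · apply hnLF
        rw [ht', ← heq]
        exact hLA
      · apply hw jL (by omega) hjLm
        exact Or.inl ⟨hL, fun hc => hnR (hc.mono (Q_antitone hC hA n (by omega)))⟩
    · rcases Nat.eq_zero_or_pos jR with h0' | h0'
      · apply ht
        rw [ht', h0', sg_zero]
      · apply hw jR (by omega) hjRm
        exact Or.inr ⟨hR, fun hc => hL0 (hc.mono (Q_antitone hC hA n (Nat.zero_le _)))⟩

lemma mem_dst {n : ℕ} {w : ℚ} :
    w ∈ Dst (Aa hC hA n 1) (Aa hC hA n 2) ↔
      ∃ j, 1 ≤ j ∧ j ≤ mm n ∧ w ∈ Bd (Q hC hA n j) := by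
  constructor
  · intro h
    by_contra hc
    push_neg at hc
    have hnb : ∀ j, 1 ≤ j → j ≤ mm n → w ∉ Bd (Q hC hA n j) := fun j h1 h2 hw => by
      exact absurd hw (by
        intro hww
        exact (hc j h1 h2) hww)
    rw [Dst, Set.mem_symmDiff] at h
    rcases h with ⟨h1, _⟩ | ⟨h1, _⟩
    · exact noblock hC hA hnb (by decide) h1
    · exact noblock hC hA hnb (by decide) h1
  · rintro ⟨j, h1, h2, hw⟩
    obtain ⟨hmem, hnone⟩ := block_mem hC hA h1 h2 hw
    rw [Dst, Set.mem_symmDiff]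
    rcases labN_cases j with hl | hl
    · rw [hl] at hmem
      exact Or.inl ⟨hmem, hnone 2 (by decide) (by rw [hl]; decide)⟩
    · rw [hl] at hmem
      exact Or.inr ⟨hmem, hnone 1 (by decide) (by rw [hl]; decide)⟩

lemma dst_side {n j : ℕ} (h1 : 1 ≤ j) (h2 : j ≤ mm n) {w : ℚ}
    (hw : w ∈ Bd (Q hC hA n j)) :
    (w ∈ Bd (Aa hC hA n 1)) ↔ labN j = 1 := by
  obtain ⟨hmem, hnone⟩ := block_mem hC hA h1 h2 hw
  rcases labN_cases j with hl | hl
  · rw [hl] at hmem ⊢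
    simp [hmem]
  · rw [hl] at hmem ⊢
    constructor
    · intro hmem1
      exact absurd hmem1 (hnone 1 (by decide) (by rw [hl]; decide))
    · intro h
      exact absurd h (by decide)

end Master

/-! ### counting the oscillation set -/

section Count
variable {C : Set (Set ℚ)} (hC : IsSubalg C) (hA : IsAtomlessAlg C)

lemma bQ_fin (n j : ℕ) : (Bd (Q hC hA n j)).Finite := bd_finite (Q_good hC hA n j)

lemma bQ_ne {n j : ℕ} (h : j ≤ mm n) : (Bd (Q hC hA n j)).Nonempty := by
  rw [Q_eq hC hA n h]
  exact bd_nonempty (P_good hC hA j) (P_ne hC hA j)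

def bmn (n j : ℕ) : ℚ :=
  if h : (Bd (Q hC hA n j)).Nonempty then
    Classical.choose (Set.exists_min_image (Bd (Q hC hA n j)) e (bQ_fin hC hA n j) h)
  else 0

def bmx (n j : ℕ) : ℚ :=
  if h : (Bd (Q hC hA n j)).Nonempty then
    Classical.choose (Set.exists_max_image (Bd (Q hC hA n j)) e (bQ_fin hC hA n j) h)
  else 0

lemma bmn_spec {n j : ℕ} (h : (Bd (Q hC hA n j)).Nonempty) :
    bmn hC hA n j ∈ Bd (Q hC hA n j) ∧
      ∀ w ∈ Bd (Q hC hA n j), e (bmn hC hA n j) ≤ e w := by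
  rw [bmn, dif_pos h]
  obtain ⟨h1, h2⟩ := Classical.choose_spec
    (Set.exists_min_image (Bd (Q hC hA n j)) e (bQ_fin hC hA n j) h)
  exact ⟨h1, h2⟩

lemma bmx_spec {n j : ℕ} (h : (Bd (Q hC hA n j)).Nonempty) :
    bmx hC hA n j ∈ Bd (Q hC hA n j) ∧
      ∀ w ∈ Bd (Q hC hA n j), e w ≤ e (bmx hC hA n j) := by
  rw [bmx, dif_pos h]
  obtain ⟨h1, h2⟩ := Classical.choose_spec
    (Set.exists_max_image (Bd (Q hC hA n j)) e (bQ_fin hC hA n j) h)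
  exact ⟨h1, h2⟩

lemma side_ne {n j j' : ℕ} (h1 : 1 ≤ j) (h2 : j ≤ mm n) (h1' : 1 ≤ j') (h2' : j' ≤ mm n)
    {w w' : ℚ} (hw : w ∈ Bd (Q hC hA n j)) (hw' : w' ∈ Bd (Q hC hA n j'))
    (hside : ¬((w' ∈ Bd (Aa hC hA n 1)) ↔ (w ∈ Bd (Aa hC hA n 1)))) :
    labN j' ≠ labN j := by
  intro hlab
  apply hside
  rw [dst_side hC hA h1' h2' hw', dst_side hC hA h1 h2 hw, hlab]

lemma altset_eq (n : ℕ) :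
    AltSet (Aa hC hA n 1) (Aa hC hA n 2) =
      (fun k => bmn hC hA n (2*k+1)) '' {k | 1 ≤ k ∧ k ≤ n+1} := by
  ext w
  constructor
  · rintro ⟨hwD, w', hw'D, hlt, hside, hbetween⟩
    obtain ⟨j, hj1, hjm, hwB⟩ := (mem_dst hC hA).mp hwD
    obtain ⟨j', hj'1, hj'm, hw'B⟩ := (mem_dst hC hA).mp hw'D
    have hlabne : labN j' ≠ labN j := side_ne hC hA hj1 hjm hj'1 hj'm hwB hw'B hside
    have hjj' : j' < j := by
      rcases Nat.lt_trichotomy j' j with h | h | h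
      · exact h
      · exact absurd (h ▸ rfl) hlabne
      · exact absurd hlt (not_lt_of_gt (bd_sepQ hC hA h hjm hj'm hwB hw'B))
    -- step 1 : w is the e-minimum of its block
    have hne_j : (Bd (Q hC hA n j)).Nonempty := bQ_ne hC hA hjm
    obtain ⟨hmemj, hminj⟩ := bmn_spec hC hA hne_j
    have hwmin : w = bmn hC hA n j := by
      by_contra hcne
      have hlt1 : e (bmn hC hA n j) < e w := by
        rcases lt_or_eq_of_le (hminj w hwB) with h | h
        · exact h
        · exact absurd (e_inj h) (fun hh => hcne hh.symm)
      have hlt2 : e w' < e (bmn hC hA n j) := bd_sepQ hC hA hjj' hj'm hjm hw'B hmemj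
      exact hbetween (bmn hC hA n j) ((mem_dst hC hA).mpr ⟨j, hj1, hjm, hmemj⟩) ⟨hlt2, hlt1⟩
    -- step 2 : the label changes at block j
    have hchange : labN j ≠ labN (j-1) := by
      intro heqlab
      have hj'j1 : j' ≠ j - 1 := by
        intro hh
        exact hlabne (hh ▸ heqlab.symm)
      have hj'lt : j' < j - 1 := by omega
      have hj11 : 1 ≤ j - 1 := by omega
      have hj1m : j - 1 ≤ mm n := by omega
      have hne_j1 : (Bd (Q hC hA n (j-1))).Nonempty := bQ_ne hC hA hj1m
      obtain ⟨hmemj1, hmaxj1⟩ := bmx_spec hC hA hne_j1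
      apply hbetween (bmx hC hA n (j-1)) ((mem_dst hC hA).mpr ⟨j-1, hj11, hj1m, hmemj1⟩)
      constructor
      · exact bd_sepQ hC hA hj'lt hj'm hj1m hw'B hmemj1
      · rw [hwmin]
        exact bd_sepQ hC hA (by omega) hj1m hjm hmemj1 hmemj
    -- conclude : j = 2k+1 with 1 ≤ k ≤ n+1
    obtain ⟨k, hk⟩ : ∃ k, j = 2*k+1 ∨ j = 2*k+2 := ⟨(j-1)/2, by omega⟩
    have hj2 : 2 ≤ j := by omega
    rcases hk with rfl | rfl
    · have hk1 : 1 ≤ k := by omega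
      have hk2 : k ≤ n + 1 := by
        have : 2*k+1 ≤ 2*n+4 := hjm
        omega
      exact ⟨k, ⟨hk1, hk2⟩, hwmin.symm⟩
    · exfalso
      apply hchange
      have : 2*k+2-1 = 2*k+1 := by omega
      rw [this]
      exact labN_same k
  · rintro ⟨k, ⟨hk1, hk2⟩, rfl⟩
    show bmn hC hA n (2*k+1) ∈ AltSet (Aa hC hA n 1) (Aa hC hA n 2)
    have hjm : 2*k+1 ≤ mm n := by
      unfold mm; omega
    have hj1m : 2*k ≤ mm n := by unfold mm; omega
    have hne_j : (Bd (Q hC hA n (2*k+1))).Nonempty := bQ_ne hC hA hjm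
    obtain ⟨hmemj, hminj⟩ := bmn_spec hC hA hne_j
    have hne_j1 : (Bd (Q hC hA n (2*k))).Nonempty := bQ_ne hC hA hj1m
    obtain ⟨hmemj1, hmaxj1⟩ := bmx_spec hC hA hne_j1
    have hk0 : 1 ≤ 2*k := by omega
    refine ⟨(mem_dst hC hA).mpr ⟨2*k+1, by omega, hjm, hmemj⟩,
      bmx hC hA n (2*k), (mem_dst hC hA).mpr ⟨2*k, hk0, hj1m, hmemj1⟩,
      bd_sepQ hC hA (by omega) hj1m hjm hmemj1 hmemj, ?_, ?_⟩
    · -- opposite sides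
      rw [dst_side hC hA hk0 hj1m hmemj1, dst_side hC hA (by omega) hjm hmemj]
      have := labN_change k hk1
      rcases labN_cases (2*k) with h | h <;> rcases labN_cases (2*k+1) with h' | h' <;>
        simp_all
    · -- nothing in between
      rintro w'' hw''D ⟨hb1, hb2⟩
      obtain ⟨j'', hj''1, hj''m, hw''B⟩ := (mem_dst hC hA).mp hw''D
      rcases Nat.lt_or_ge j'' (2*k+1) with h | h
      · have : e w'' ≤ e (bmx hC hA n (2*k)) := by
          rcases Nat.lt_or_ge j'' (2*k) with hh | hh
          · exact le_of_lt (bd_sepQ hC hA hh hj''m hj1m hw''B hmemj1)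
          · have : j'' = 2*k := by omega
            exact hmaxj1 w'' (this ▸ hw''B)
        omega
      · have : e (bmn hC hA n (2*k+1)) ≤ e w'' := by
          rcases Nat.lt_or_ge (2*k+1) j'' with hh | hh
          · exact le_of_lt (bd_sepQ hC hA hh hjm hj''m hmemj hw''B)
          · have : j'' = 2*k+1 := by omega
            exact hminj w'' (this ▸ hw''B)
        omega

lemma altset_card (n : ℕ) : (AltSet (Aa hC hA n 1) (Aa hC hA n 2)).ncard = n + 1 := by
  rw [altset_eq hC hA n]
  rw [Set.ncard_image_of_injOn]
  · have : {k | 1 ≤ k ∧ k ≤ n+1} = ↑(Finset.Icc 1 (n+1)) := by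
      ext k
      simp [Finset.mem_Icc]
    rw [this, Set.ncard_coe_finset, Nat.card_Icc]
    omega
  · intro k hk k' hk' heq
    have heq' : bmn hC hA n (2*k+1) = bmn hC hA n (2*k'+1) := heq
    by_contra hne
    simp only [mem_setOf_eq] at hk hk'
    have hjm : 2*k+1 ≤ mm n := by unfold mm; omega
    have hjm' : 2*k'+1 ≤ mm n := by unfold mm; omega
    obtain ⟨hm1, _⟩ := bmn_spec hC hA (bQ_ne hC hA hjm)
    obtain ⟨hm2, _⟩ := bmn_spec hC hA (bQ_ne hC hA hjm')
    rcases Nat.lt_or_ge k k' with h | h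
    · have := bd_sepQ hC hA (show 2*k+1 < 2*k'+1 by omega) hjm hjm' hm1 hm2
      rw [heq'] at this
      exact lt_irrefl _ this
    · have hlt : k' < k := by omega
      have := bd_sepQ hC hA (show 2*k'+1 < 2*k+1 by omega) hjm' hjm hm2 hm1
      rw [heq'] at this
      exact lt_irrefl _ this

end Count

/-! ### the embedding -/

section Emb
variable {C : Set (Set ℚ)} (hC : IsSubalg C) (hA : IsAtomlessAlg C)

lemma mem_good_RF {a : Set ℚ} (h : IsGood a) {x : ℚ} (hx : x ∈ a) : RF a x := by
  obtain ⟨hsub, n, f, hE, hmono, hmem⟩ := h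
  obtain ⟨i, hi, h1, h2⟩ := (hmem x (hsub hx)).mp hx
  refine ⟨f (2*i+1), h2, fun y hy1 hy2 => ?_⟩
  have hy0 : (0:ℚ) ≤ y := le_trans (hsub hx).1 (le_of_lt hy1)
  have hy1' : y < 1 := lt_of_lt_of_le hy2 (Eset_le_one (hE (2*i+1) (by omega)))
  exact (hmem y (mem_Xset hy0 hy1')).mpr ⟨i, hi, by linarith, hy2⟩

lemma zero_mem_bdX : (0:ℚ) ∈ Bd Xset := by
  refine Or.inr ⟨⟨1, by norm_num, fun x h1 h2 => ⟨le_of_lt h1, h2⟩⟩, ?_⟩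
  rintro ⟨r, hr, hfull⟩
  obtain ⟨x, h1, h2⟩ := exists_btw hr
  exact absurd ((hfull x h1 h2).1) (by linarith)

lemma zero_not_P1 : (0:ℚ) ∉ P hC hA 1 := by
  intro h
  have he0 : e 0 ≤ Mb hC hA 0 :=
    Finset.le_sup (f := e) ((bd_finite isGood_X).mem_toFinset.mpr zero_mem_bdX)
  exact ((chain_spec hC hA 0).2.2 0 he0).2 (mem_good_RF (P_good hC hA 1) h)

lemma sg_one : sg 1 = 1 := by norm_num [sg]
lemma sg_three : sg 3 = 2 := by norm_num [sg]

lemma A_ne (n : ℕ) (t : Fin 3) : (Aa hC hA n t).Nonempty := by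
  fin_cases t
  · refine ⟨0, 0, by omega, sg_zero, ?_, ?_⟩
    · rw [Q_zero hC hA n]; exact ⟨le_refl _, by norm_num⟩
    · rw [Q_eq hC hA n (by unfold mm; omega)]
      exact zero_not_P1 hC hA
  · have hdn : (P hC hA 1 \ P hC hA 2).Nonempty := Set.diff_nonempty.mpr (chain_spec hC hA 1).1.2
    obtain ⟨x, hx⟩ := hdn
    refine ⟨x, 1, by unfold mm; omega, sg_one, ?_⟩
    unfold Dp
    rw [Q_eq hC hA n (by unfold mm; omega), Q_eq hC hA n (by unfold mm; omega)]
    exact hx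
  · have hdn : (P hC hA 3 \ P hC hA 4).Nonempty := Set.diff_nonempty.mpr (chain_spec hC hA 3).1.2
    obtain ⟨x, hx⟩ := hdn
    refine ⟨x, 3, by unfold mm; omega, sg_three, ?_⟩
    unfold Dp
    rw [Q_eq hC hA n (by unfold mm; omega), Q_eq hC hA n (by unfold mm; omega)]
    exact hx

def femb (n : ℕ) (s : Set (Fin 3)) : Set ℚ := {x | ∃ i ∈ s, x ∈ Aa hC hA n i}

lemma femb_single (n : ℕ) (t : Fin 3) : femb hC hA n {t} = Aa hC hA n t := by
  ext x
  simp [femb]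

lemma femb_memC (n : ℕ) (s : Set (Fin 3)) : femb hC hA n s ∈ C := by
  have hrw : femb hC hA n s =
      ((if (0:Fin 3) ∈ s then Aa hC hA n 0 else ∅) ∪
       (if (1:Fin 3) ∈ s then Aa hC hA n 1 else ∅)) ∪
       (if (2:Fin 3) ∈ s then Aa hC hA n 2 else ∅) := by
    ext x
    simp only [femb, mem_setOf_eq, mem_union]
    constructor
    · rintro ⟨i, hi, hx⟩
      fin_cases i
      · refine Or.inl (Or.inl ?_)
        have hi' : (0:Fin 3) ∈ s := hi
        have hx' : x ∈ Aa hC hA n 0 := hx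
        rw [if_pos hi']; exact hx'
      · refine Or.inl (Or.inr ?_)
        have hi' : (1:Fin 3) ∈ s := hi
        have hx' : x ∈ Aa hC hA n 1 := hx
        rw [if_pos hi']; exact hx'
      · refine Or.inr ?_
        have hi' : (2:Fin 3) ∈ s := hi
        have hx' : x ∈ Aa hC hA n 2 := hx
        rw [if_pos hi']; exact hx'
    · rintro ((h | h) | h)
      · by_cases h0 : (0:Fin 3) ∈ s
        · exact ⟨0, h0, by rwa [if_pos h0] at h⟩
        · rw [if_neg h0] at h; exact absurd h (notMem_empty x)
      · by_cases h0 : (1:Fin 3) ∈ s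
        · exact ⟨1, h0, by rwa [if_pos h0] at h⟩
        · rw [if_neg h0] at h; exact absurd h (notMem_empty x)
      · by_cases h0 : (2:Fin 3) ∈ s
        · exact ⟨2, h0, by rwa [if_pos h0] at h⟩
        · rw [if_neg h0] at h; exact absurd h (notMem_empty x)
  rw [hrw]
  have hif : ∀ (b : Prop) (_ : Decidable b) (t : Fin 3),
      (if b then Aa hC hA n t else ∅) ∈ C := by
    intro b hb t
    split
    · exact A_memC hC hA n t
    · exact hC.2.1
  exact hC.2.2.2.1 _ (hC.2.2.2.1 _ (hif _ _ 0) _ (hif _ _ 1)) _ (hif _ _ 2)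

lemma femb_emb (n : ℕ) : IsEmb3 (femb hC hA n) := by
  refine ⟨?_, ?_, ?_, ?_, ?_, ?_, ?_⟩
  · -- injective
    intro s t h
    by_contra hne
    have : ∃ i, ¬(i ∈ s ↔ i ∈ t) := by
      by_contra hc
      push_neg at hc
      exact hne (Set.ext fun i => hc i)
    obtain ⟨i, hi⟩ := this
    have key : ∀ s t : Set (Fin 3), femb hC hA n s = femb hC hA n t →
        i ∈ s → i ∉ t → False := by
      intro s t h his hit
      obtain ⟨x, hx⟩ := A_ne hC hA n i
      have hxs : x ∈ femb hC hA n s := ⟨i, his, hx⟩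
      rw [h] at hxs
      obtain ⟨i', hi', hx'⟩ := hxs
      have : i = i' := by
        by_contra hii
        exact A_disj hC hA n hii hx hx'
      exact hit (this ▸ hi')
    rcases Classical.em (i ∈ s) with his | his
    · exact key s t h his (fun hit => hi ⟨fun _ => hit, fun _ => his⟩)
    · have hit : i ∈ t := by
        by_contra hit
        exact hi ⟨fun h' => absurd h' his, fun h' => absurd h' hit⟩
      exact key t s h.symm hit his
  · intro s
    exact mem_good hC (femb_memC hC hA n s)
  · ext x
    simp [femb]
  · ext x
    constructor
    · rintro ⟨i, -, hx⟩
      exact A_sub_X hC hA n i hx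
    · intro hx
      obtain ⟨t, ht⟩ := A_cover hC hA n hx
      exact ⟨t, Set.mem_univ t, ht⟩
  · intro s t
    ext x
    simp only [femb, mem_setOf_eq, Set.mem_union]
    constructor
    · rintro ⟨i, (hi | hi), hx⟩
      · exact Or.inl ⟨i, hi, hx⟩
      · exact Or.inr ⟨i, hi, hx⟩
    · rintro (⟨i, hi, hx⟩ | ⟨i, hi, hx⟩)
      · exact ⟨i, Or.inl hi, hx⟩
      · exact ⟨i, Or.inr hi, hx⟩
  · intro s t
    ext x
    simp only [femb, mem_setOf_eq, Set.mem_inter_iff]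
    constructor
    · rintro ⟨i, ⟨hi1, hi2⟩, hx⟩
      exact ⟨⟨i, hi1, hx⟩, ⟨i, hi2, hx⟩⟩
    · rintro ⟨⟨i, hi, hx⟩, ⟨i', hi', hx'⟩⟩
      have : i = i' := by
        by_contra hii
        exact A_disj hC hA n hii hx hx'
      exact ⟨i, ⟨hi, this ▸ hi'⟩, hx⟩
  · intro s
    ext x
    simp only [femb, mem_setOf_eq, Set.mem_diff, Set.mem_compl_iff]
    constructor
    · rintro ⟨i, hi, hx⟩
      refine ⟨A_sub_X hC hA n i hx, ?_⟩
      rintro ⟨i', hi', hx'⟩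
      have : i = i' := by
        by_contra hii
        exact A_disj hC hA n hii hx hx'
      exact hi (this ▸ hi')
    · rintro ⟨hxX, hns⟩
      obtain ⟨t, ht⟩ := A_cover hC hA n hxX
      refine ⟨t, fun hts => hns ⟨t, hts, ht⟩, ht⟩

lemma chi_femb (n : ℕ) : chi (femb hC hA n) = n := by
  unfold chi
  rw [femb_single hC hA n 1, femb_single hC hA n 2, altset_card hC hA n]
  omega

end Emb

end
end BRD

/-- Main theorem: there is a coloring of the embeddings of the
3-atom Boolean algebra into the countable atomless Boolean algebra `B` with
infinitely many colors such that every countable atomless subalgebra of `B`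
contains an embedded copy of every color. Hence the big Ramsey degree of the
3-atom Boolean algebra in `B` is infinite. -/
theorem big_ramsey_three_atoms_infinite :
    ∃ χ : (Set (Fin 3) → Set ℚ) → ℕ,
      ∀ C : Set (Set ℚ), IsSubalg C → IsAtomlessAlg C → C.Countable →
        ∀ n : ℕ, ∃ f : Set (Fin 3) → Set ℚ,
          IsEmb3 f ∧ (∀ s, f s ∈ C) ∧ χ f = n := by
  refine ⟨BRD.chi, fun C hC hA _ n => ?_⟩
  exact ⟨BRD.femb hC hA n, BRD.femb_emb hC hA n, BRD.femb_memC hC hA n, BRD.chi_femb hC hA n⟩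
end
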